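/- arXiv:2411.07937 — 12 statements merged into one kernel-verified Lean document; each statement's English description precedes it below -/
import Mathlib

section
/- Let H, H₁, H₂ be Hilbert spaces over 𝕜, L : H₁ → H and M : H₂ → H bounded linear operators. The following are equivalent: (1) range L ⊆ range M; (2) there exists a constant c > 0 such that ‖L* u‖² ≤ c·‖M* u‖² for all u ∈ H (i.e. L L* ≤ c·M M* in the operator order); (3) there exists a bounded linear operator X : H₁ → H₂ with L = M ∘ X. (Douglas factorization theorem.) -/
open ContinuousLinearMap

open Filter Topology in
/-- Auxiliary "majorization implies factorization" lemma: if `‖B u‖ ≤ C * ‖A u‖` for all `u`,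
then `B` factors through `A` as `B = D ∘ A` for a bounded operator `D`. -/
private lemma douglas_aux
    {𝕜 : Type*} [RCLike 𝕜] {H H₁ H₂ : Type*}
    [NormedAddCommGroup H] [InnerProductSpace 𝕜 H]
    [NormedAddCommGroup H₁] [InnerProductSpace 𝕜 H₁] [CompleteSpace H₁]
    [NormedAddCommGroup H₂] [InnerProductSpace 𝕜 H₂] [CompleteSpace H₂]
    (A : H →L[𝕜] H₂) (B : H →L[𝕜] H₁) (C : ℝ)
    (hAB : ∀ u, ‖B u‖ ≤ C * ‖A u‖) :
    ∃ D : H₂ →L[𝕜] H₁, ∀ u, D (A u) = B u := by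
  classical
  have wd : ∀ u v : H, A u = A v → B u = B v := by
    intro u v h
    have h0 : ‖B u - B v‖ ≤ C * ‖A u - A v‖ := by
      simpa [map_sub] using hAB (u - v)
    rw [h, sub_self, norm_zero, mul_zero] at h0
    have := norm_le_zero_iff.mp h0
    exact sub_eq_zero.mp this
  set S : Submodule 𝕜 H₂ := LinearMap.range (A : H →ₗ[𝕜] H₂) with hSdef
  have key : ∀ s : S, ∃ u : H, A u = (s : H₂) := fun s => LinearMap.mem_range.mp s.2
  let f : S → H₁ := fun s => B (key s).choose
  have hf : ∀ (s : S) (u : H), A u = (s : H₂) → f s = B u := fun s u hu =>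
    wd _ _ ((key s).choose_spec.trans hu.symm)
  let D₀ : S →ₗ[𝕜] H₁ :=
    { toFun := f
      map_add' := by
        intro s t
        obtain ⟨us, hus⟩ := key s
        obtain ⟨ut, hut⟩ := key t
        rw [hf s us hus, hf t ut hut,
          hf (s + t) (us + ut) (by rw [map_add, hus, hut]; rfl), map_add]
      map_smul' := by
        intro a s
        obtain ⟨us, hus⟩ := key s
        show f (a • s) = a • f s
        rw [hf s us hus, hf (a • s) (a • us) (by rw [map_smul, hus]; rfl), map_smul] }
  have hD₀ : ∀ s : S, ‖D₀ s‖ ≤ C * ‖s‖ := by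
    intro s
    obtain ⟨u, hu⟩ := key s
    have hs : D₀ s = B u := hf s u hu
    have hnorm : ‖s‖ = ‖A u‖ := by rw [hu]; rfl
    rw [hs, hnorm]
    exact hAB u
  let D₁ : S →L[𝕜] H₁ := D₀.mkContinuous C hD₀
  set T : Submodule 𝕜 H₂ := S.topologicalClosure with hTdef
  let e : S →L[𝕜] T :=
    { toLinearMap := Submodule.inclusion S.le_topologicalClosure
      cont := continuous_induced_rng.2 continuous_subtype_val }
  have he_iso : Isometry e := AddMonoidHomClass.isometry_of_norm e (fun x => rfl)
  have h_dense : DenseRange e := by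
    refine IsInducing.subtypeVal.dense_iff.2 fun x => ?_
    have hx : (x : H₂) ∈ closure (S : Set H₂) :=
      (Submodule.topologicalClosure_coe S).subset x.2
    refine closure_mono (fun y hy => ?_) hx
    exact ⟨e ⟨y, hy⟩, ⟨⟨y, hy⟩, rfl⟩, rfl⟩
  haveI : CompleteSpace T := S.isClosed_topologicalClosure.completeSpace_coe
  let D₂ : T →L[𝕜] H₁ := D₁.extend e
  refine ⟨D₂.comp (Submodule.orthogonalProjectionOnto T), fun u => ?_⟩
  have hmemS : A u ∈ S := LinearMap.mem_range.mpr ⟨u, rfl⟩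
  have hmemT : A u ∈ T := S.le_topologicalClosure hmemS
  have hproj : Submodule.orthogonalProjectionOnto T (A u) = e ⟨A u, hmemS⟩ := by
    apply Subtype.ext
    rw [show (↑(Submodule.orthogonalProjectionOnto T (A u)) : H₂) = A u from congrArg Subtype.val (Submodule.orthogonalProjectionOnto_mem_subspace_eq_self ⟨A u, hmemT⟩)]
    rfl
  rw [ContinuousLinearMap.comp_apply, hproj, ContinuousLinearMap.extend_eq _ h_dense he_iso.isUniformInducing]
  exact hf ⟨A u, hmemS⟩ u rfl

open Filter Topology in
/-- **Douglas factorization theorem.** For bounded operators `L : H₁ →L H` and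
`M : H₂ →L H` between Hilbert spaces, the following are equivalent:
(1) `range L ⊆ range M`;
(2) there is `c > 0` with `‖L* u‖² ≤ c * ‖M* u‖²` for all `u` (i.e. `L L* ≤ c • M M*`);
(3) there is a bounded operator `X : H₁ →L H₂` with `L = M ∘ X`. -/
theorem douglas_factorization
    {𝕜 : Type*} [RCLike 𝕜]
    {H H₁ H₂ : Type*}
    [NormedAddCommGroup H] [InnerProductSpace 𝕜 H] [CompleteSpace H]
    [NormedAddCommGroup H₁] [InnerProductSpace 𝕜 H₁] [CompleteSpace H₁]
    [NormedAddCommGroup H₂] [InnerProductSpace 𝕜 H₂] [CompleteSpace H₂]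
    (L : H₁ →L[𝕜] H) (M : H₂ →L[𝕜] H) :
    List.TFAE [
      Set.range L ⊆ Set.range M,
      ∃ c : ℝ, 0 < c ∧ ∀ u : H,
        ‖ContinuousLinearMap.adjoint L u‖ ^ 2 ≤ c * ‖ContinuousLinearMap.adjoint M u‖ ^ 2,
      ∃ X : H₁ →L[𝕜] H₂, L = M.comp X ] := by
  classical
  tfae_have 1 → 3 := by
    intro h1
    set K : Submodule 𝕜 H₂ := LinearMap.ker (M : H₂ →ₗ[𝕜] H) with hKdef
    haveI : CompleteSpace K := (ContinuousLinearMap.isClosed_ker M).completeSpace_coe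
    have hLM : ∀ h : H₁, ∃ u : H₂, M u = L h := fun h => h1 ⟨h, rfl⟩
    let g : H₁ → H₂ := fun h => ↑(Submodule.orthogonalProjectionOnto Kᗮ (hLM h).choose)
    have hgmem : ∀ h : H₁, g h ∈ Kᗮ := fun h => (Submodule.orthogonalProjectionOnto Kᗮ _).2
    have huniq : ∀ a b : H₂, a ∈ Kᗮ → b ∈ Kᗮ → M a = M b → a = b := by
      intro a b ha hb hab
      have hk : a - b ∈ K := by
        rw [hKdef, LinearMap.mem_ker, ContinuousLinearMap.coe_coe, map_sub, hab, sub_self]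
      have ho : a - b ∈ Kᗮ := Submodule.sub_mem _ ha hb
      have h0 : (inner 𝕜 (a - b) (a - b) : 𝕜) = 0 :=
        ((Submodule.mem_orthogonal K (a - b)).mp ho) (a - b) hk
      exact sub_eq_zero.mp (inner_self_eq_zero.mp h0)
    have hMg : ∀ h : H₁, M (g h) = L h := by
      intro h
      have hu := (hLM h).choose_spec
      set u := (hLM h).choose with hudef
      have hsub : u - ↑(Submodule.orthogonalProjectionOnto Kᗮ u) ∈ Kᗮᗮ :=
        Submodule.sub_starProjection_mem_orthogonal (K := Kᗮ) u
      rw [Submodule.orthogonal_orthogonal] at hsub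
      have h0 : M (u - ↑(Submodule.orthogonalProjectionOnto Kᗮ u)) = 0 := hsub
      rw [map_sub, sub_eq_zero] at h0
      show M ↑(Submodule.orthogonalProjectionOnto Kᗮ u) = L h
      rw [← h0, hu]
    let X₀ : H₁ →ₗ[𝕜] H₂ :=
      { toFun := g
        map_add' := by
          intro x y
          refine huniq _ _ (hgmem _) (Submodule.add_mem _ (hgmem x) (hgmem y)) ?_
          rw [hMg, map_add, map_add, hMg, hMg]
        map_smul' := by
          intro a x
          refine huniq _ _ (hgmem _) (Submodule.smul_mem _ a (hgmem x)) ?_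
          rw [hMg, map_smul, map_smul, hMg]
          rfl }
    have hclosed : ∀ (u : ℕ → H₁) (x : H₁) (y : H₂), Tendsto u atTop (𝓝 x) →
        Tendsto (⇑X₀ ∘ u) atTop (𝓝 y) → y = X₀ x := by
      intro u x y hux huy
      have h1lim : Tendsto (fun n => M (X₀ (u n))) atTop (𝓝 (M y)) :=
        (M.continuous.tendsto y).comp huy
      have h2 : ∀ n, M (X₀ (u n)) = L (u n) := fun n => hMg (u n)
      have h3 : Tendsto (fun n => L (u n)) atTop (𝓝 (L x)) :=
        (L.continuous.tendsto x).comp hux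
      have hMy : M y = L x := by
        refine tendsto_nhds_unique ?_ h3
        simpa only [h2] using h1lim
      have hymem : y ∈ Kᗮ := by
        have hcl : IsClosed (Kᗮ : Set H₂) := Submodule.isClosed_orthogonal K
        exact hcl.mem_of_tendsto huy (Filter.Eventually.of_forall fun n => hgmem (u n))
      refine huniq y (X₀ x) hymem (hgmem x) ?_
      rw [hMy]
      exact (hMg x).symm
    let X : H₁ →L[𝕜] H₂ := ContinuousLinearMap.ofSeqClosedGraph hclosed
    refine ⟨X, ?_⟩
    ext h
    exact (hMg h).symm
  tfae_have 3 → 2 := by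
    rintro ⟨X, rfl⟩
    refine ⟨‖ContinuousLinearMap.adjoint X‖ ^ 2 + 1, by positivity, fun u => ?_⟩
    rw [adjoint_comp, ContinuousLinearMap.comp_apply]
    have h1 : ‖ContinuousLinearMap.adjoint X (ContinuousLinearMap.adjoint M u)‖ ≤
        ‖ContinuousLinearMap.adjoint X‖ * ‖ContinuousLinearMap.adjoint M u‖ := le_opNorm _ _
    nlinarith [norm_nonneg (ContinuousLinearMap.adjoint M u),
      norm_nonneg (ContinuousLinearMap.adjoint X (ContinuousLinearMap.adjoint M u)),
      norm_nonneg (ContinuousLinearMap.adjoint X)]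
  tfae_have 2 → 3 := by
    rintro ⟨c, hc, h2⟩
    have hb : ∀ u, ‖ContinuousLinearMap.adjoint L u‖ ≤
        Real.sqrt c * ‖ContinuousLinearMap.adjoint M u‖ := by
      intro u
      have h3 : ‖ContinuousLinearMap.adjoint L u‖ ≤
          Real.sqrt (c * ‖ContinuousLinearMap.adjoint M u‖ ^ 2) := by
        rw [← Real.sqrt_sq (norm_nonneg (ContinuousLinearMap.adjoint L u))]
        exact Real.sqrt_le_sqrt (h2 u)
      rwa [Real.sqrt_mul hc.le, Real.sqrt_sq (norm_nonneg _)] at h3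
    obtain ⟨D, hD⟩ := douglas_aux (ContinuousLinearMap.adjoint M)
      (ContinuousLinearMap.adjoint L) (Real.sqrt c) hb
    refine ⟨ContinuousLinearMap.adjoint D, ?_⟩
    have hcomp : D.comp (ContinuousLinearMap.adjoint M) = ContinuousLinearMap.adjoint L :=
      ContinuousLinearMap.ext hD
    calc L = ContinuousLinearMap.adjoint (ContinuousLinearMap.adjoint L) :=
          (adjoint_adjoint L).symm
      _ = ContinuousLinearMap.adjoint (D.comp (ContinuousLinearMap.adjoint M)) := by
          rw [hcomp]
      _ = (ContinuousLinearMap.adjoint (ContinuousLinearMap.adjoint M)).comp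
            (ContinuousLinearMap.adjoint D) := adjoint_comp _ _
      _ = M.comp (ContinuousLinearMap.adjoint D) := by rw [adjoint_adjoint]
  tfae_have 3 → 1 := by
    rintro ⟨X, rfl⟩ x ⟨h, rfl⟩
    exact ⟨X h, rfl⟩
  tfae_finish
end

section
/- Let F : Ω → H be a continuous frame for H with bounds 0 < A ≤ B and let θ be its transform operator. Then: (1) θ is injective and has closed range; (2) the pre-frame operator T = θ* : L²(Ω, 𝕜) → H is surjective; (3) the frame operator S = θ* ∘ θ is self-adjoint, satisfies A·‖u‖² ≤ re⟪S u, u⟫ ≤ B·‖u‖² for all u ∈ H, and is bijective. -/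
open MeasureTheory ContinuousLinearMap

/-- For a continuous frame `F : Ω → H` with bounds `0 < A ≤ B` and transform operator `θ`:
(1) `θ` is injective with closed range; (2) the pre-frame operator `T = θ*` is surjective;
(3) the frame operator `S = θ* ∘ θ` is self-adjoint, satisfies
`A‖u‖² ≤ re⟪S u, u⟫ ≤ B‖u‖²`, and is bijective. -/
theorem continuous_frame_associated_operators
    {𝕜 : Type*} [RCLike 𝕜] [MeasurableSpace 𝕜] [BorelSpace 𝕜]
    {H : Type*} [NormedAddCommGroup H] [InnerProductSpace 𝕜 H] [CompleteSpace H]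
    {Ω : Type*} [MeasurableSpace Ω] {μ : Measure Ω}
    (F : Ω → H) (A B : ℝ) (hA : 0 < A) (hAB : A ≤ B)
    (hmeas : ∀ u : H, Measurable fun ω => (inner 𝕜 (F ω) u : 𝕜))
    (hframe : ∀ u : H, A * ‖u‖ ^ 2 ≤ ∫ ω, ‖(inner 𝕜 (F ω) u : 𝕜)‖ ^ 2 ∂μ ∧
      ∫ ω, ‖(inner 𝕜 (F ω) u : 𝕜)‖ ^ 2 ∂μ ≤ B * ‖u‖ ^ 2)
    (θ : H →L[𝕜] Lp 𝕜 2 μ)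
    (hθ : ∀ u : H, (θ u : Ω → 𝕜) =ᵐ[μ] fun ω => (inner 𝕜 (F ω) u : 𝕜)) :
    Function.Injective ⇑θ ∧ IsClosed (Set.range ⇑θ) ∧
    Function.Surjective ⇑(ContinuousLinearMap.adjoint θ) ∧
    IsSelfAdjoint ((ContinuousLinearMap.adjoint θ).comp θ) ∧
    (∀ u : H,
      A * ‖u‖ ^ 2 ≤ RCLike.re (inner 𝕜 (((ContinuousLinearMap.adjoint θ).comp θ) u) u : 𝕜) ∧
      RCLike.re (inner 𝕜 (((ContinuousLinearMap.adjoint θ).comp θ) u) u : 𝕜) ≤ B * ‖u‖ ^ 2) ∧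
    Function.Bijective ⇑((ContinuousLinearMap.adjoint θ).comp θ) := by
  set S := (ContinuousLinearMap.adjoint θ).comp θ with hS
  -- key norm identity
  have hnorm : ∀ u : H, ‖θ u‖ ^ 2 = ∫ ω, ‖(inner 𝕜 (F ω) u : 𝕜)‖ ^ 2 ∂μ := by
    intro u
    have h1 : ‖θ u‖ ^ 2 = RCLike.re (inner 𝕜 (θ u) (θ u) : 𝕜) :=
      (inner_self_eq_norm_sq _).symm
    have h2 : (inner 𝕜 (θ u) (θ u) : 𝕜) = ∫ ω, inner 𝕜 ((θ u : Lp 𝕜 2 μ) ω) ((θ u : Lp 𝕜 2 μ) ω) ∂μ :=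
      L2.inner_def _ _
    have hint : Integrable (fun ω => (inner 𝕜 ((θ u : Lp 𝕜 2 μ) ω) ((θ u : Lp 𝕜 2 μ) ω) : 𝕜)) μ :=
      L2.integrable_inner _ _
    have h3 : RCLike.re (∫ ω, (inner 𝕜 ((θ u : Lp 𝕜 2 μ) ω) ((θ u : Lp 𝕜 2 μ) ω) : 𝕜) ∂μ)
        = ∫ ω, RCLike.re (inner 𝕜 ((θ u : Lp 𝕜 2 μ) ω) ((θ u : Lp 𝕜 2 μ) ω) : 𝕜) ∂μ :=
      (integral_re hint).symm
    rw [h1, h2, h3]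
    refine integral_congr_ae ?_
    filter_upwards [hθ u] with ω hω
    rw [inner_self_eq_norm_sq, hω]
  -- lower/upper bounds for ‖θ u‖²
  have hlow : ∀ u : H, A * ‖u‖ ^ 2 ≤ ‖θ u‖ ^ 2 := fun u => (hnorm u) ▸ (hframe u).1
  have hup : ∀ u : H, ‖θ u‖ ^ 2 ≤ B * ‖u‖ ^ 2 := fun u => (hnorm u) ▸ (hframe u).2
  -- re ⟪S u, u⟫ = ‖θ u‖²
  have hSinner : ∀ u : H, RCLike.re (inner 𝕜 (S u) u : 𝕜) = ‖θ u‖ ^ 2 := by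
    intro u
    have : (inner 𝕜 (S u) u : 𝕜) = inner 𝕜 (θ u) (θ u) := by
      rw [hS, comp_apply, adjoint_inner_left]
    rw [this, inner_self_eq_norm_sq]
  -- antilipschitz for θ
  have hbound : ∀ u : H, ‖u‖ ≤ (⟨(Real.sqrt A)⁻¹, by positivity⟩ : NNReal) * ‖θ u‖ := by
    intro u
    have h1 : Real.sqrt A * ‖u‖ ≤ ‖θ u‖ := by
      have h2 : (Real.sqrt A * ‖u‖) ^ 2 ≤ ‖θ u‖ ^ 2 := by
        rw [mul_pow, Real.sq_sqrt hA.le]; exact hlow u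
      have := Real.sqrt_le_sqrt h2
      rwa [Real.sqrt_sq (by positivity), Real.sqrt_sq (norm_nonneg _)] at this
    have hsA : 0 < Real.sqrt A := Real.sqrt_pos.mpr hA
    show ‖u‖ ≤ (Real.sqrt A)⁻¹ * ‖θ u‖
    have h3 := (le_div_iff₀' hsA).mpr h1
    simpa [div_eq_inv_mul] using h3
  have hanti : AntilipschitzWith _ θ := θ.antilipschitz_of_bound hbound
  have hinj : Function.Injective ⇑θ := hanti.injective
  have hclosed : IsClosed (Set.range ⇑θ) := hanti.isClosed_range θ.uniformContinuous
  -- self-adjointness of S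
  have hsa : IsSelfAdjoint S := by
    rw [hS, isSelfAdjoint_iff']
    rw [adjoint_comp, adjoint_adjoint]
  -- bounds for S
  have hbounds : ∀ u : H,
      A * ‖u‖ ^ 2 ≤ RCLike.re (inner 𝕜 (S u) u : 𝕜) ∧
      RCLike.re (inner 𝕜 (S u) u : 𝕜) ≤ B * ‖u‖ ^ 2 := fun u =>
    ⟨(hSinner u) ▸ hlow u, (hSinner u) ▸ hup u⟩
  -- S is injective (antilipschitz)
  have hSbound : ∀ u : H, ‖u‖ ≤ (⟨A⁻¹, by positivity⟩ : NNReal) * ‖S u‖ := by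
    intro u
    have h1 : A * ‖u‖ ^ 2 ≤ ‖S u‖ * ‖u‖ :=
      le_trans (hbounds u).1 (re_inner_le_norm _ _)
    show ‖u‖ ≤ A⁻¹ * ‖S u‖
    rcases eq_or_lt_of_le (norm_nonneg u) with h | h
    · rw [← h]; positivity
    · rw [pow_two, ← mul_assoc] at h1
      have h2 : A * ‖u‖ ≤ ‖S u‖ := le_of_mul_le_mul_right h1 h
      calc ‖u‖ = A⁻¹ * (A * ‖u‖) := by field_simp
        _ ≤ A⁻¹ * ‖S u‖ := mul_le_mul_of_nonneg_left h2 (by positivity)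
  have hSanti : AntilipschitzWith _ S := S.antilipschitz_of_bound hSbound
  have hSinj : Function.Injective ⇑S := hSanti.injective
  -- S surjective via orthogonal complement of closed range
  have hSclosed : IsClosed (Set.range ⇑S) := hSanti.isClosed_range S.uniformContinuous
  have hSsurj : Function.Surjective ⇑S := by
    set R : Submodule 𝕜 H := LinearMap.range (S : H →ₗ[𝕜] H) with hR
    have hRclosed : IsClosed (R : Set H) := by
      have : (R : Set H) = Set.range ⇑S := by
        ext x; simp [hR, LinearMap.mem_range, Set.mem_range]
      rw [this]; exact hSclosed
    haveI : CompleteSpace R := hRclosed.completeSpace_coe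
    have hRorth : Rᗮ = ⊥ := by
      rw [Submodule.eq_bot_iff]
      intro w hw
      have h0 : (inner 𝕜 (S w) w : 𝕜) = 0 := hw (S w) ⟨w, rfl⟩
      have h1 := (hbounds w).1
      rw [h0, map_zero] at h1
      have : ‖w‖ ^ 2 ≤ 0 := by nlinarith
      have : ‖w‖ = 0 := by nlinarith [norm_nonneg w, sq_nonneg ‖w‖]
      exact norm_eq_zero.mp this
    have hRtop : R = ⊤ := by
      have := Submodule.orthogonal_orthogonal R
      rw [hRorth, Submodule.bot_orthogonal_eq_top] at this
      exact this.symm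
    intro v
    have : v ∈ R := hRtop ▸ Submodule.mem_top
    obtain ⟨u, hu⟩ := this
    exact ⟨u, hu⟩
  have hadj_surj : Function.Surjective ⇑(ContinuousLinearMap.adjoint θ) := by
    intro v
    obtain ⟨u, hu⟩ := hSsurj v
    exact ⟨θ u, hu⟩
  exact ⟨hinj, hclosed, hadj_surj, hsa, hbounds, hSinj, hSsurj⟩
end

section
/- Let F : Ω → H be a Bessel mapping with bound B, θ its transform operator, T = θ* its pre-frame operator, and K ∈ B(H). The following are equivalent: (1) F is a continuous K-frame, i.e. there exists A > 0 with A·‖K* u‖² ≤ ∫_Ω |⟪F ω, u⟫|² dμ(ω) for all u ∈ H; (2) range K ⊆ range T; (3) there exists a bounded linear operator X : H → L²(Ω, 𝕜) with K = T ∘ X (such an X is called a K-dual mapping to F). -/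
open MeasureTheory ContinuousLinearMap

private lemma l2_norm_sq' {𝕜 : Type*} [RCLike 𝕜] {Ω : Type*} [MeasurableSpace Ω] {μ : Measure Ω}
    (f : Lp 𝕜 2 μ) : ‖f‖ ^ 2 = ∫ ω, ‖f ω‖ ^ 2 ∂μ := by
  have h1 : RCLike.re (inner 𝕜 f f : 𝕜) = ‖f‖ ^ 2 := inner_self_eq_norm_sq f
  rw [← h1, L2.inner_def, ← integral_re (L2.integrable_inner f f)]
  congr 1
  ext ω
  exact inner_self_eq_norm_sq (f ω)

/-- Douglas: a norm majorization implies range inclusion. -/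
private lemma range_subset_of_norm_le {𝕜 E G : Type*} [RCLike 𝕜]
    [NormedAddCommGroup E] [InnerProductSpace 𝕜 E] [CompleteSpace E]
    [NormedAddCommGroup G] [InnerProductSpace 𝕜 G] [CompleteSpace G]
    (θ : E →L[𝕜] G) (K : E →L[𝕜] E) (C : ℝ)
    (hle : ∀ u : E, ‖ContinuousLinearMap.adjoint K u‖ ≤ C * ‖θ u‖) :
    Set.range ⇑K ⊆ Set.range ⇑(ContinuousLinearMap.adjoint θ) := by
  rintro _ ⟨x, rfl⟩
  have hker : ∀ u v : E, θ u = θ v → (inner 𝕜 (K x) u : 𝕜) = inner 𝕜 (K x) v := by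
    intro u v huv
    have h0 : ContinuousLinearMap.adjoint K (u - v) = 0 := by
      have hz : θ (u - v) = 0 := by rw [map_sub, huv, sub_self]
      have := hle (u - v)
      rw [hz, norm_zero, mul_zero] at this
      exact norm_le_zero_iff.mp this
    have : (inner 𝕜 (K x) (u - v) : 𝕜) = 0 := by
      rw [← ContinuousLinearMap.adjoint_inner_right, h0, inner_zero_right]
    rw [inner_sub_right, sub_eq_zero] at this
    exact this
  set p : Submodule 𝕜 G := LinearMap.range (θ : E →ₗ[𝕜] G) with hp
  have hmem : ∀ w : p, (w : G) ∈ LinearMap.range (θ : E →ₗ[𝕜] G) := fun w => w.2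
  let sec : p → E := fun w => (LinearMap.mem_range.mp (hmem w)).choose
  have hsec : ∀ w : p, θ (sec w) = (w : G) := fun w =>
    (LinearMap.mem_range.mp (hmem w)).choose_spec
  let ℓ₀ : p →ₗ[𝕜] 𝕜 :=
    { toFun := fun w => (inner 𝕜 (K x) (sec w) : 𝕜)
      map_add' := by
        intro w₁ w₂
        show (inner 𝕜 (K x) (sec (w₁ + w₂)) : 𝕜)
            = (inner 𝕜 (K x) (sec w₁) : 𝕜) + (inner 𝕜 (K x) (sec w₂) : 𝕜)
        have h : (inner 𝕜 (K x) (sec (w₁ + w₂)) : 𝕜) = inner 𝕜 (K x) (sec w₁ + sec w₂) := by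
          refine hker _ _ ?_
          rw [map_add, hsec, hsec, hsec, Submodule.coe_add]
        rw [h, inner_add_right]
      map_smul' := by
        intro r w
        show (inner 𝕜 (K x) (sec (r • w)) : 𝕜) = r • (inner 𝕜 (K x) (sec w) : 𝕜)
        have h : (inner 𝕜 (K x) (sec (r • w)) : 𝕜) = inner 𝕜 (K x) (r • sec w) := by
          refine hker _ _ ?_
          rw [θ.map_smul, hsec, hsec, Submodule.coe_smul]
        rw [h, inner_smul_right, smul_eq_mul] }
  have hℓbound : ∀ w : p, ‖ℓ₀ w‖ ≤ (C * ‖x‖) * ‖w‖ := by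
    intro w
    have h1 : ℓ₀ w = (inner 𝕜 x (ContinuousLinearMap.adjoint K (sec w)) : 𝕜) := by
      simp only [ℓ₀, LinearMap.coe_mk, AddHom.coe_mk]
      rw [ContinuousLinearMap.adjoint_inner_right]
    have hC : 0 ≤ C * ‖θ (sec w)‖ := le_trans (norm_nonneg _) (hle (sec w))
    rw [h1]
    calc ‖(inner 𝕜 x (ContinuousLinearMap.adjoint K (sec w)) : 𝕜)‖
        ≤ ‖x‖ * ‖ContinuousLinearMap.adjoint K (sec w)‖ := norm_inner_le_norm _ _
      _ ≤ ‖x‖ * (C * ‖θ (sec w)‖) := mul_le_mul_of_nonneg_left (hle _) (norm_nonneg _)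
      _ = (C * ‖x‖) * ‖w‖ := by rw [hsec, ← Submodule.coe_norm]; ring
  let ℓ : p →L[𝕜] 𝕜 := LinearMap.mkContinuous ℓ₀ (C * ‖x‖) hℓbound
  obtain ⟨g, hg, -⟩ := exists_extension_norm_eq p ℓ
  refine ⟨(InnerProductSpace.toDual 𝕜 G).symm g, ?_⟩
  refine ext_inner_right 𝕜 fun u => ?_
  rw [ContinuousLinearMap.adjoint_inner_left, InnerProductSpace.toDual_symm_apply]
  have hmemθu : θ u ∈ p := LinearMap.mem_range.mpr ⟨u, rfl⟩
  have : g (θ u) = ℓ ⟨θ u, hmemθu⟩ := hg ⟨θ u, hmemθu⟩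
  rw [this]
  exact hker _ _ (by rw [hsec])

/-- Douglas: range inclusion implies a bounded factorization, via the closed graph theorem. -/
private lemma exists_factor_of_range_subset {𝕜 E G : Type*} [RCLike 𝕜]
    [NormedAddCommGroup E] [InnerProductSpace 𝕜 E] [CompleteSpace E]
    [NormedAddCommGroup G] [InnerProductSpace 𝕜 G] [CompleteSpace G]
    (T : G →L[𝕜] E) (K : E →L[𝕜] E)
    (hrange : Set.range ⇑K ⊆ Set.range ⇑T) :
    ∃ X : E →L[𝕜] G, K = T.comp X := by
  set N : Submodule 𝕜 G := LinearMap.ker (T : G →ₗ[𝕜] E) with hN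
  have hNc : IsClosed (N : Set G) := isClosed_ker T
  haveI : CompleteSpace N := hNc.completeSpace_coe
  have huniq : ∀ v w : G, v ∈ Nᗮ → w ∈ Nᗮ → T v = T w → v = w := by
    intro v w hv hw hvw
    have h1 : v - w ∈ N := by
      rw [hN, LinearMap.mem_ker, map_sub, ContinuousLinearMap.coe_coe, hvw, sub_self]
    have h2 : v - w ∈ Nᗮ := Submodule.sub_mem _ hv hw
    have h3 : (inner 𝕜 (v - w) (v - w) : 𝕜) = 0 := h2 (v - w) h1
    rw [inner_self_eq_zero, sub_eq_zero] at h3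
    exact h3
  have hex : ∀ u : E, ∃ v : G, v ∈ Nᗮ ∧ T v = K u := by
    intro u
    obtain ⟨w, hw⟩ := hrange ⟨u, rfl⟩
    refine ⟨w - (N.orthogonalProjectionOnto w : G),
      Submodule.sub_starProjection_mem_orthogonal (K := N) w, ?_⟩
    have h0 : T ((N.orthogonalProjectionOnto w : G)) = 0 := (N.orthogonalProjectionOnto w).2
    rw [map_sub, h0, sub_zero, hw]
  let f : E → G := fun u => (hex u).choose
  have hf1 : ∀ u, f u ∈ Nᗮ := fun u => (hex u).choose_spec.1
  have hf2 : ∀ u, T (f u) = K u := fun u => (hex u).choose_spec.2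
  let X₀ : E →ₗ[𝕜] G :=
    { toFun := f
      map_add' := fun u v => huniq _ _ (hf1 _) (Submodule.add_mem _ (hf1 u) (hf1 v))
        (by simp [hf2])
      map_smul' := fun r u => huniq _ _ (hf1 _) (Submodule.smul_mem _ r (hf1 u))
        (by simp [hf2]) }
  have hgraph : IsClosed (X₀.graph : Set (E × G)) := by
    have hEq : (X₀.graph : Set (E × G)) =
        {q : E × G | q.2 ∈ Nᗮ} ∩ {q : E × G | T q.2 = K q.1} := by
      ext ⟨u, v⟩
      simp only [Set.mem_inter_iff, SetLike.mem_coe, LinearMap.mem_graph_iff,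
        Set.mem_setOf_eq]
      constructor
      · rintro rfl
        exact ⟨hf1 u, hf2 u⟩
      · rintro ⟨hv1, hv2⟩
        exact huniq v (f u) hv1 (hf1 u) (by rw [hv2, hf2])
    rw [hEq]
    refine IsClosed.inter ?_ ?_
    · exact (Submodule.isClosed_orthogonal N).preimage continuous_snd
    · exact isClosed_eq (T.continuous.comp continuous_snd) (K.continuous.comp continuous_fst)
  refine ⟨ContinuousLinearMap.ofIsClosedGraph hgraph, ?_⟩
  ext u
  rw [ContinuousLinearMap.comp_apply,
    show (ContinuousLinearMap.ofIsClosedGraph hgraph) u = X₀ u from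
      congrFun (ContinuousLinearMap.coeFn_ofIsClosedGraph hgraph) u]
  exact (hf2 u).symm

/-- Characterization of continuous `K`-frames: for a Bessel mapping `F` with transform
operator `θ` and pre-frame operator `T = θ*`, and `K ∈ B(H)`, the following are
equivalent: (1) `F` is a continuous `K`-frame; (2) `range K ⊆ range T`;
(3) there is `X ∈ B(H, L²(Ω, 𝕜))` with `K = T ∘ X` (a `K`-dual mapping to `F`). -/
theorem continuous_K_frame_tfae
    {𝕜 : Type*} [RCLike 𝕜] [MeasurableSpace 𝕜] [BorelSpace 𝕜]
    {H : Type*} [NormedAddCommGroup H] [InnerProductSpace 𝕜 H] [CompleteSpace H]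
    {Ω : Type*} [MeasurableSpace Ω] {μ : Measure Ω}
    (F : Ω → H) (B : ℝ) (hB : 0 < B)
    (hmeas : ∀ u : H, Measurable fun ω => (inner 𝕜 (F ω) u : 𝕜))
    (hbound : ∀ u : H, ∫ ω, ‖(inner 𝕜 (F ω) u : 𝕜)‖ ^ 2 ∂μ ≤ B * ‖u‖ ^ 2)
    (θ : H →L[𝕜] Lp 𝕜 2 μ)
    (hθ : ∀ u : H, (θ u : Ω → 𝕜) =ᵐ[μ] fun ω => (inner 𝕜 (F ω) u : 𝕜))
    (K : H →L[𝕜] H) :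
    List.TFAE [
      ∃ A : ℝ, 0 < A ∧ ∀ u : H,
        A * ‖ContinuousLinearMap.adjoint K u‖ ^ 2 ≤ ∫ ω, ‖(inner 𝕜 (F ω) u : 𝕜)‖ ^ 2 ∂μ,
      Set.range ⇑K ⊆ Set.range ⇑(ContinuousLinearMap.adjoint θ),
      ∃ X : H →L[𝕜] Lp 𝕜 2 μ, K = (ContinuousLinearMap.adjoint θ).comp X ] := by
  have hnorm : ∀ u : H, ∫ ω, ‖(inner 𝕜 (F ω) u : 𝕜)‖ ^ 2 ∂μ = ‖θ u‖ ^ 2 := by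
    intro u
    rw [l2_norm_sq' (θ u)]
    refine integral_congr_ae ?_
    filter_upwards [hθ u] with ω hω
    rw [hω]
  have h12 : (∃ A : ℝ, 0 < A ∧ ∀ u : H,
        A * ‖ContinuousLinearMap.adjoint K u‖ ^ 2 ≤ ∫ ω, ‖(inner 𝕜 (F ω) u : 𝕜)‖ ^ 2 ∂μ) →
      Set.range ⇑K ⊆ Set.range ⇑(ContinuousLinearMap.adjoint θ) := by
    rintro ⟨A, hA, hAle⟩
    refine range_subset_of_norm_le θ K (Real.sqrt A⁻¹) fun u => ?_
    have h := hAle u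
    rw [hnorm u] at h
    have h2 : ‖ContinuousLinearMap.adjoint K u‖ ^ 2 ≤ (Real.sqrt A⁻¹ * ‖θ u‖) ^ 2 := by
      rw [mul_pow, Real.sq_sqrt (by positivity)]
      rw [← le_div_iff₀' hA] at h
      simpa [div_eq_inv_mul] using h
    calc ‖ContinuousLinearMap.adjoint K u‖
        = Real.sqrt (‖ContinuousLinearMap.adjoint K u‖ ^ 2) :=
          (Real.sqrt_sq (norm_nonneg _)).symm
      _ ≤ Real.sqrt ((Real.sqrt A⁻¹ * ‖θ u‖) ^ 2) := Real.sqrt_le_sqrt h2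
      _ = Real.sqrt A⁻¹ * ‖θ u‖ := Real.sqrt_sq (by positivity)
  have h23 : Set.range ⇑K ⊆ Set.range ⇑(ContinuousLinearMap.adjoint θ) →
      ∃ X : H →L[𝕜] Lp 𝕜 2 μ, K = (ContinuousLinearMap.adjoint θ).comp X :=
    fun hrange => exists_factor_of_range_subset (ContinuousLinearMap.adjoint θ) K hrange
  have h31 : (∃ X : H →L[𝕜] Lp 𝕜 2 μ, K = (ContinuousLinearMap.adjoint θ).comp X) →
      (∃ A : ℝ, 0 < A ∧ ∀ u : H,
        A * ‖ContinuousLinearMap.adjoint K u‖ ^ 2 ≤ ∫ ω, ‖(inner 𝕜 (F ω) u : 𝕜)‖ ^ 2 ∂μ) := by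
    rintro ⟨X, hX⟩
    refine ⟨(‖X‖ ^ 2 + 1)⁻¹, by positivity, fun u => ?_⟩
    rw [hnorm u]
    have h1 : ContinuousLinearMap.adjoint K u = ContinuousLinearMap.adjoint X (θ u) := by
      rw [hX, ContinuousLinearMap.adjoint_comp, ContinuousLinearMap.adjoint_adjoint]
      rfl
    have h2 : ‖ContinuousLinearMap.adjoint K u‖ ≤ ‖X‖ * ‖θ u‖ := by
      rw [h1]
      calc ‖ContinuousLinearMap.adjoint X (θ u)‖
          ≤ ‖ContinuousLinearMap.adjoint X‖ * ‖θ u‖ :=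
            (ContinuousLinearMap.adjoint X).le_opNorm _
        _ = ‖X‖ * ‖θ u‖ := by rw [LinearIsometryEquiv.norm_map]
    rw [inv_mul_le_iff₀ (by positivity)]
    nlinarith [mul_le_mul h2 h2 (norm_nonneg _) (by positivity : (0:ℝ) ≤ ‖X‖ * ‖θ u‖),
      sq_nonneg (‖θ u‖), norm_nonneg (θ u)]
  tfae_finish
end

section
/- Let K ∈ B(H) and F : Ω → H be a continuous K-frame with bounds 0 < A ≤ B. Then for every X ∈ B(H), F is a continuous (K ∘ X)-frame: for all u ∈ H, (A / max(‖X‖², 1))·‖(K ∘ X)* u‖² ≤ ∫_Ω |⟪F ω, u⟫|² dμ(ω) ≤ B·‖u‖². Moreover, if θ is the transform operator of F and G ∈ B(H, L²(Ω, 𝕜)) is a K-dual mapping to F (i.e. K = θ* ∘ G), then G ∘ X is a (K ∘ X)-dual mapping to F (i.e. K ∘ X = θ* ∘ (G ∘ X)). -/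
open MeasureTheory ContinuousLinearMap

/-- If `F` is a continuous `K`-frame with bounds `0 < A ≤ B`, then for every `X ∈ B(H)`,
`F` is a continuous `(K ∘ X)`-frame with bounds `A / max ‖X‖² 1` and `B`. Moreover if
`G` is a `K`-dual mapping to `F` (i.e. `K = θ* ∘ G` where `θ` is the transform operator
of `F`), then `G ∘ X` is a `(K ∘ X)`-dual mapping to `F`. -/
theorem continuous_K_frame_comp
    {𝕜 : Type*} [RCLike 𝕜] [MeasurableSpace 𝕜] [BorelSpace 𝕜]
    {H : Type*} [NormedAddCommGroup H] [InnerProductSpace 𝕜 H] [CompleteSpace H]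
    {Ω : Type*} [MeasurableSpace Ω] {μ : Measure Ω}
    (K : H →L[𝕜] H) (F : Ω → H) (A B : ℝ) (hA : 0 < A) (hAB : A ≤ B)
    (hmeas : ∀ u : H, Measurable fun ω => (inner 𝕜 (F ω) u : 𝕜))
    (hframe : ∀ u : H,
      A * ‖ContinuousLinearMap.adjoint K u‖ ^ 2 ≤ ∫ ω, ‖(inner 𝕜 (F ω) u : 𝕜)‖ ^ 2 ∂μ ∧
      ∫ ω, ‖(inner 𝕜 (F ω) u : 𝕜)‖ ^ 2 ∂μ ≤ B * ‖u‖ ^ 2)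
    (X : H →L[𝕜] H) :
    (∀ u : H,
      (A / max (‖X‖ ^ 2) 1) * ‖ContinuousLinearMap.adjoint (K.comp X) u‖ ^ 2 ≤
        ∫ ω, ‖(inner 𝕜 (F ω) u : 𝕜)‖ ^ 2 ∂μ ∧
      ∫ ω, ‖(inner 𝕜 (F ω) u : 𝕜)‖ ^ 2 ∂μ ≤ B * ‖u‖ ^ 2) ∧
    (∀ θ : H →L[𝕜] Lp 𝕜 2 μ,
      (∀ u : H, (θ u : Ω → 𝕜) =ᵐ[μ] fun ω => (inner 𝕜 (F ω) u : 𝕜)) →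
      ∀ G : H →L[𝕜] Lp 𝕜 2 μ, K = (ContinuousLinearMap.adjoint θ).comp G →
        K.comp X = (ContinuousLinearMap.adjoint θ).comp (G.comp X)) := by

  constructor
  · intro u
    refine ⟨?_, (hframe u).2⟩
    have hmax : (0:ℝ) < max (‖X‖ ^ 2) 1 := lt_of_lt_of_le one_pos (le_max_right _ _)
    have h1 : ‖ContinuousLinearMap.adjoint (K.comp X) u‖ ^ 2 ≤
        max (‖X‖ ^ 2) 1 * ‖ContinuousLinearMap.adjoint K u‖ ^ 2 := by
      have : ContinuousLinearMap.adjoint (K.comp X) u =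
          ContinuousLinearMap.adjoint X (ContinuousLinearMap.adjoint K u) := by
        rw [ContinuousLinearMap.adjoint_comp]; rfl
      rw [this]
      calc ‖ContinuousLinearMap.adjoint X (ContinuousLinearMap.adjoint K u)‖ ^ 2
          ≤ (‖ContinuousLinearMap.adjoint X‖ * ‖ContinuousLinearMap.adjoint K u‖) ^ 2 := by
            gcongr; exact ContinuousLinearMap.le_opNorm _ _
        _ = ‖X‖ ^ 2 * ‖ContinuousLinearMap.adjoint K u‖ ^ 2 := by
            rw [mul_pow, LinearIsometryEquiv.norm_map ContinuousLinearMap.adjoint X]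
        _ ≤ max (‖X‖ ^ 2) 1 * ‖ContinuousLinearMap.adjoint K u‖ ^ 2 := by
            gcongr; exact le_max_left _ _
    calc (A / max (‖X‖ ^ 2) 1) * ‖ContinuousLinearMap.adjoint (K.comp X) u‖ ^ 2
        ≤ (A / max (‖X‖ ^ 2) 1) * (max (‖X‖ ^ 2) 1 * ‖ContinuousLinearMap.adjoint K u‖ ^ 2) := by
          gcongr
      _ = A * ‖ContinuousLinearMap.adjoint K u‖ ^ 2 := by
          field_simp
      _ ≤ _ := (hframe u).1
  · intro θ hθ G hK
    rw [hK, ContinuousLinearMap.comp_assoc]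
end

section
/- Let F₁ : Ω → H₁ and F₂ : Ω → H₂ be Bessel mappings with transform operators θ₁, θ₂, and let θ be the transform operator of the Bessel mapping F₁ ⊕ F₂ : Ω → H₁ ⊕ H₂. Then: (1) for every g ∈ L²(Ω, 𝕜), θ* g = (θ₁* g, θ₂* g); (2) for every (u, v) ∈ H₁ ⊕ H₂, θ (u, v) = θ₁ u + θ₂ v in L²(Ω, 𝕜); (3) the frame operator S = θ* ∘ θ of F₁ ⊕ F₂ satisfies S (u, v) = (θ₁*θ₁ u + θ₁*θ₂ v, θ₂*θ₂ v + θ₂*θ₁ u) for all (u, v) ∈ H₁ ⊕ H₂. -/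
open MeasureTheory ContinuousLinearMap

/-- `F : Ω → H` is a Bessel mapping for `H` with bound `B` (with respect to `μ`). -/
def IsBesselMapping {𝕜 : Type*} [RCLike 𝕜] [MeasurableSpace 𝕜] [BorelSpace 𝕜]
    {H : Type*} [NormedAddCommGroup H] [InnerProductSpace 𝕜 H]
    {Ω : Type*} [MeasurableSpace Ω] (μ : Measure Ω) (F : Ω → H) (B : ℝ) : Prop :=
  ∀ u : H, Measurable (fun ω => (inner 𝕜 (F ω) u : 𝕜)) ∧
    ∫ ω, ‖(inner 𝕜 (F ω) u : 𝕜)‖ ^ 2 ∂μ ≤ B * ‖u‖ ^ 2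

/-- The operators associated with the super Bessel mapping `F₁ ⊕ F₂` in terms of those
of `F₁` and `F₂`: (1) `T g = (T₁ g, T₂ g)`; (2) `θ (u, v) = θ₁ u + θ₂ v`;
(3) `S (u, v) = (θ₁*θ₁ u + θ₁*θ₂ v, θ₂*θ₂ v + θ₂*θ₁ u)`. -/
theorem prod_bessel_operators
    {𝕜 : Type*} [RCLike 𝕜] [MeasurableSpace 𝕜] [BorelSpace 𝕜]
    {H₁ : Type*} [NormedAddCommGroup H₁] [InnerProductSpace 𝕜 H₁] [CompleteSpace H₁]
    {H₂ : Type*} [NormedAddCommGroup H₂] [InnerProductSpace 𝕜 H₂] [CompleteSpace H₂]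
    {Ω : Type*} [MeasurableSpace Ω] {μ : Measure Ω}
    (F₁ : Ω → H₁) (F₂ : Ω → H₂) (B₁ B₂ : ℝ) (hB₁ : 0 < B₁) (hB₂ : 0 < B₂)
    (hF₁ : IsBesselMapping (𝕜 := 𝕜) μ F₁ B₁) (hF₂ : IsBesselMapping (𝕜 := 𝕜) μ F₂ B₂)
    (θ₁ : H₁ →L[𝕜] Lp 𝕜 2 μ)
    (hθ₁ : ∀ u : H₁, (θ₁ u : Ω → 𝕜) =ᵐ[μ] fun ω => (inner 𝕜 (F₁ ω) u : 𝕜))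
    (θ₂ : H₂ →L[𝕜] Lp 𝕜 2 μ)
    (hθ₂ : ∀ v : H₂, (θ₂ v : Ω → 𝕜) =ᵐ[μ] fun ω => (inner 𝕜 (F₂ ω) v : 𝕜))
    (θ : WithLp 2 (H₁ × H₂) →L[𝕜] Lp 𝕜 2 μ)
    (hθ : ∀ x : WithLp 2 (H₁ × H₂), (θ x : Ω → 𝕜) =ᵐ[μ]
      fun ω => (inner 𝕜 ((WithLp.equiv 2 (H₁ × H₂)).symm (F₁ ω, F₂ ω)) x : 𝕜)) :
    (∀ g : Lp 𝕜 2 μ, ContinuousLinearMap.adjoint θ g =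
      (WithLp.equiv 2 (H₁ × H₂)).symm
        (ContinuousLinearMap.adjoint θ₁ g, ContinuousLinearMap.adjoint θ₂ g)) ∧
    (∀ (u : H₁) (v : H₂),
      θ ((WithLp.equiv 2 (H₁ × H₂)).symm (u, v)) = θ₁ u + θ₂ v) ∧
    (∀ (u : H₁) (v : H₂),
      ContinuousLinearMap.adjoint θ (θ ((WithLp.equiv 2 (H₁ × H₂)).symm (u, v))) =
        (WithLp.equiv 2 (H₁ × H₂)).symm
          (ContinuousLinearMap.adjoint θ₁ (θ₁ u) + ContinuousLinearMap.adjoint θ₁ (θ₂ v),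
           ContinuousLinearMap.adjoint θ₂ (θ₂ v) + ContinuousLinearMap.adjoint θ₂ (θ₁ u))) := by
  have h2 : ∀ (u : H₁) (v : H₂),
      θ ((WithLp.equiv 2 (H₁ × H₂)).symm (u, v)) = θ₁ u + θ₂ v := by
    intro u v
    apply Lp.ext
    filter_upwards [hθ ((WithLp.equiv 2 (H₁ × H₂)).symm (u, v)), Lp.coeFn_add (θ₁ u) (θ₂ v),
      hθ₁ u, hθ₂ v] with ω h h' h1 h2'
    rw [h, h', Pi.add_apply, h1, h2', WithLp.prod_inner_apply]
    simp
  have h1 : ∀ g : Lp 𝕜 2 μ, ContinuousLinearMap.adjoint θ g =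
      (WithLp.equiv 2 (H₁ × H₂)).symm
        (ContinuousLinearMap.adjoint θ₁ g, ContinuousLinearMap.adjoint θ₂ g) := by
    intro g
    apply ext_inner_left 𝕜
    intro x
    obtain ⟨u, v⟩ := x
    rw [adjoint_inner_right]
    have : (WithLp.toLp 2 (u, v) : WithLp 2 (H₁ × H₂)) = (WithLp.equiv 2 (H₁ × H₂)).symm (u, v) := rfl
    rw [this, h2, WithLp.prod_inner_apply]
    simp [adjoint_inner_right, inner_add_left]
  refine ⟨h1, h2, fun u v => ?_⟩
  rw [h1, h2]
  congr 1
  ext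
  · simp
  · simp [add_comm]
end

section
/- Let K ∈ B(H₁ ⊕ H₂) and write K₁ = fst ∘ K : H₁ ⊕ H₂ → H₁ and K₂ = snd ∘ K : H₁ ⊕ H₂ → H₂ (so K(u, v) = (K₁(u, v), K₂(u, v))). If F₁ ⊕ F₂ : Ω → H₁ ⊕ H₂ is a continuous K-frame with bounds 0 < A ≤ B, then: (i) for all u ∈ H₁, A·‖K₁* u‖² ≤ ∫_Ω |⟪F₁ ω, u⟫|² dμ(ω) ≤ B·‖u‖², and (ii) for all v ∈ H₂, A·‖K₂* v‖² ≤ ∫_Ω |⟪F₂ ω, v⟫|² dμ(ω) ≤ B·‖v‖², where K₁* : H₁ → H₁ ⊕ H₂ and K₂* : H₂ → H₁ ⊕ H₂ are the adjoints. -/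
open MeasureTheory ContinuousLinearMap

/-- If `F₁ ⊕ F₂ : Ω → H₁ ⊕ H₂` is a continuous `K`-frame with bounds `0 < A ≤ B`, and
`K₁ = fst ∘ K`, `K₂ = snd ∘ K` are the components of `K`, then for all `u ∈ H₁`,
`A‖K₁* u‖² ≤ ∫ |⟪F₁ ω, u⟫|² dμ ≤ B‖u‖²`, and for all `v ∈ H₂`,
`A‖K₂* v‖² ≤ ∫ |⟪F₂ ω, v⟫|² dμ ≤ B‖v‖²`. -/
theorem prod_K_frame_component_bounds
    {𝕜 : Type*} [RCLike 𝕜] [MeasurableSpace 𝕜] [BorelSpace 𝕜]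
    {H₁ : Type*} [NormedAddCommGroup H₁] [InnerProductSpace 𝕜 H₁] [CompleteSpace H₁]
    {H₂ : Type*} [NormedAddCommGroup H₂] [InnerProductSpace 𝕜 H₂] [CompleteSpace H₂]
    {Ω : Type*} [MeasurableSpace Ω] {μ : Measure Ω}
    (K : WithLp 2 (H₁ × H₂) →L[𝕜] WithLp 2 (H₁ × H₂))
    (K₁ : WithLp 2 (H₁ × H₂) →L[𝕜] H₁) (K₂ : WithLp 2 (H₁ × H₂) →L[𝕜] H₂)
    (hK₁ : ∀ x : WithLp 2 (H₁ × H₂), K₁ x = (WithLp.equiv 2 (H₁ × H₂) (K x)).1)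
    (hK₂ : ∀ x : WithLp 2 (H₁ × H₂), K₂ x = (WithLp.equiv 2 (H₁ × H₂) (K x)).2)
    (F₁ : Ω → H₁) (F₂ : Ω → H₂) (A B : ℝ) (hA : 0 < A) (hAB : A ≤ B)
    (hmeas : ∀ x : WithLp 2 (H₁ × H₂), Measurable
      fun ω => (inner 𝕜 ((WithLp.equiv 2 (H₁ × H₂)).symm (F₁ ω, F₂ ω)) x : 𝕜))
    (hframe : ∀ x : WithLp 2 (H₁ × H₂),
      A * ‖ContinuousLinearMap.adjoint K x‖ ^ 2 ≤
        ∫ ω, ‖(inner 𝕜 ((WithLp.equiv 2 (H₁ × H₂)).symm (F₁ ω, F₂ ω)) x : 𝕜)‖ ^ 2 ∂μ ∧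
      ∫ ω, ‖(inner 𝕜 ((WithLp.equiv 2 (H₁ × H₂)).symm (F₁ ω, F₂ ω)) x : 𝕜)‖ ^ 2 ∂μ ≤
        B * ‖x‖ ^ 2) :
    (∀ u : H₁,
      A * ‖ContinuousLinearMap.adjoint K₁ u‖ ^ 2 ≤
        ∫ ω, ‖(inner 𝕜 (F₁ ω) u : 𝕜)‖ ^ 2 ∂μ ∧
      ∫ ω, ‖(inner 𝕜 (F₁ ω) u : 𝕜)‖ ^ 2 ∂μ ≤ B * ‖u‖ ^ 2) ∧
    (∀ v : H₂,
      A * ‖ContinuousLinearMap.adjoint K₂ v‖ ^ 2 ≤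
        ∫ ω, ‖(inner 𝕜 (F₂ ω) v : 𝕜)‖ ^ 2 ∂μ ∧
      ∫ ω, ‖(inner 𝕜 (F₂ ω) v : 𝕜)‖ ^ 2 ∂μ ≤ B * ‖v‖ ^ 2) := by
  constructor
  · intro u
    set xu : WithLp 2 (H₁ × H₂) := (WithLp.equiv 2 (H₁ × H₂)).symm (u, 0) with hxu
    have hnorm : ‖xu‖ ^ 2 = ‖u‖ ^ 2 := by
      rw [WithLp.prod_norm_sq_eq_of_L2]
      simp [hxu]
    have hadj : ContinuousLinearMap.adjoint K₁ u = ContinuousLinearMap.adjoint K xu := by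
      apply ext_inner_right 𝕜
      intro y
      rw [ContinuousLinearMap.adjoint_inner_left, ContinuousLinearMap.adjoint_inner_left,
        WithLp.prod_inner_apply]
      simp [hxu, hK₁]
    have hinner : ∀ ω, (inner 𝕜 ((WithLp.equiv 2 (H₁ × H₂)).symm (F₁ ω, F₂ ω)) xu : 𝕜)
        = inner 𝕜 (F₁ ω) u := by
      intro ω
      rw [WithLp.prod_inner_apply]
      simp [hxu]
    have h := hframe xu
    simp only [hinner, hadj, hnorm] at h ⊢
    exact h
  · intro v
    set xv : WithLp 2 (H₁ × H₂) := (WithLp.equiv 2 (H₁ × H₂)).symm (0, v) with hxv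
    have hnorm : ‖xv‖ ^ 2 = ‖v‖ ^ 2 := by
      rw [WithLp.prod_norm_sq_eq_of_L2]
      simp [hxv]
    have hadj : ContinuousLinearMap.adjoint K₂ v = ContinuousLinearMap.adjoint K xv := by
      apply ext_inner_right 𝕜
      intro y
      rw [ContinuousLinearMap.adjoint_inner_left, ContinuousLinearMap.adjoint_inner_left,
        WithLp.prod_inner_apply]
      simp [hxv, hK₂]
    have hinner : ∀ ω, (inner 𝕜 ((WithLp.equiv 2 (H₁ × H₂)).symm (F₁ ω, F₂ ω)) xv : 𝕜)
        = inner 𝕜 (F₂ ω) v := by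
      intro ω
      rw [WithLp.prod_inner_apply]
      simp [hxv]
    have h := hframe xv
    simp only [hinner, hadj, hnorm] at h ⊢
    exact h
end

section
/- Let K₁ ∈ B(H₁) and K₂ ∈ B(H₂). If F₁ ⊕ F₂ : Ω → H₁ ⊕ H₂ is a continuous (K₁ ⊕ K₂)-frame with bounds 0 < A ≤ B, then F₁ is a continuous K₁-frame for H₁ with bounds A, B and F₂ is a continuous K₂-frame for H₂ with bounds A, B. -/
open MeasureTheory ContinuousLinearMap

/-- The direct sum operator `K₁ ⊕ K₂` on the super Hilbert space `H₁ ⊕ H₂`, mapping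
`(u, v)` to `(K₁ u, K₂ v)`. -/
noncomputable def prodOp {𝕜 : Type*} [RCLike 𝕜]
    {H₁ : Type*} [NormedAddCommGroup H₁] [InnerProductSpace 𝕜 H₁]
    {H₂ : Type*} [NormedAddCommGroup H₂] [InnerProductSpace 𝕜 H₂]
    (K₁ : H₁ →L[𝕜] H₁) (K₂ : H₂ →L[𝕜] H₂) :
    WithLp 2 (H₁ × H₂) →L[𝕜] WithLp 2 (H₁ × H₂) :=
  ((WithLp.prodContinuousLinearEquiv 2 𝕜 H₁ H₂).symm.toContinuousLinearMap).comp
    ((K₁.prodMap K₂).comp (WithLp.prodContinuousLinearEquiv 2 𝕜 H₁ H₂).toContinuousLinearMap)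


section Aux
variable {𝕜 : Type*} [RCLike 𝕜]
    {H₁ : Type*} [NormedAddCommGroup H₁] [InnerProductSpace 𝕜 H₁] [CompleteSpace H₁]
    {H₂ : Type*} [NormedAddCommGroup H₂] [InnerProductSpace 𝕜 H₂] [CompleteSpace H₂]

omit [CompleteSpace H₁] [CompleteSpace H₂] in
lemma prodOp_fst (K₁ : H₁ →L[𝕜] H₁) (K₂ : H₂ →L[𝕜] H₂) (x : WithLp 2 (H₁ × H₂)) :
    (prodOp K₁ K₂ x).fst = K₁ x.fst := rfl

omit [CompleteSpace H₁] [CompleteSpace H₂] in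
lemma prodOp_snd (K₁ : H₁ →L[𝕜] H₁) (K₂ : H₂ →L[𝕜] H₂) (x : WithLp 2 (H₁ × H₂)) :
    (prodOp K₁ K₂ x).snd = K₂ x.snd := rfl

lemma adjoint_prodOp (K₁ : H₁ →L[𝕜] H₁) (K₂ : H₂ →L[𝕜] H₂) :
    adjoint (prodOp K₁ K₂) = prodOp (adjoint K₁) (adjoint K₂) := by
  symm
  rw [eq_adjoint_iff]
  intro x y
  simp [WithLp.prod_inner_apply, prodOp_fst, prodOp_snd, adjoint_inner_left]

end Aux

/-- If `F₁ ⊕ F₂` is a continuous `(K₁ ⊕ K₂)`-frame for `H₁ ⊕ H₂` with bounds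
`0 < A ≤ B`, then `F₁` is a continuous `K₁`-frame for `H₁` with bounds `A, B` and `F₂`
is a continuous `K₂`-frame for `H₂` with bounds `A, B`. -/
theorem prod_K_frame_components
    {𝕜 : Type*} [RCLike 𝕜] [MeasurableSpace 𝕜] [BorelSpace 𝕜]
    {H₁ : Type*} [NormedAddCommGroup H₁] [InnerProductSpace 𝕜 H₁] [CompleteSpace H₁]
    {H₂ : Type*} [NormedAddCommGroup H₂] [InnerProductSpace 𝕜 H₂] [CompleteSpace H₂]
    {Ω : Type*} [MeasurableSpace Ω] {μ : Measure Ω}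
    (K₁ : H₁ →L[𝕜] H₁) (K₂ : H₂ →L[𝕜] H₂)
    (F₁ : Ω → H₁) (F₂ : Ω → H₂) (A B : ℝ) (hA : 0 < A) (hAB : A ≤ B)
    (hmeas : ∀ x : WithLp 2 (H₁ × H₂), Measurable
      fun ω => (inner 𝕜 ((WithLp.equiv 2 (H₁ × H₂)).symm (F₁ ω, F₂ ω)) x : 𝕜))
    (hframe : ∀ x : WithLp 2 (H₁ × H₂),
      A * ‖ContinuousLinearMap.adjoint (prodOp K₁ K₂) x‖ ^ 2 ≤
        ∫ ω, ‖(inner 𝕜 ((WithLp.equiv 2 (H₁ × H₂)).symm (F₁ ω, F₂ ω)) x : 𝕜)‖ ^ 2 ∂μ ∧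
      ∫ ω, ‖(inner 𝕜 ((WithLp.equiv 2 (H₁ × H₂)).symm (F₁ ω, F₂ ω)) x : 𝕜)‖ ^ 2 ∂μ ≤
        B * ‖x‖ ^ 2) :
    (∀ u : H₁, Measurable (fun ω => (inner 𝕜 (F₁ ω) u : 𝕜)) ∧
      A * ‖ContinuousLinearMap.adjoint K₁ u‖ ^ 2 ≤
        ∫ ω, ‖(inner 𝕜 (F₁ ω) u : 𝕜)‖ ^ 2 ∂μ ∧
      ∫ ω, ‖(inner 𝕜 (F₁ ω) u : 𝕜)‖ ^ 2 ∂μ ≤ B * ‖u‖ ^ 2) ∧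
    (∀ v : H₂, Measurable (fun ω => (inner 𝕜 (F₂ ω) v : 𝕜)) ∧
      A * ‖ContinuousLinearMap.adjoint K₂ v‖ ^ 2 ≤
        ∫ ω, ‖(inner 𝕜 (F₂ ω) v : 𝕜)‖ ^ 2 ∂μ ∧
      ∫ ω, ‖(inner 𝕜 (F₂ ω) v : 𝕜)‖ ^ 2 ∂μ ≤ B * ‖v‖ ^ 2) := by
  constructor
  · intro u
    set x : WithLp 2 (H₁ × H₂) := (WithLp.equiv 2 (H₁ × H₂)).symm (u, 0) with hx
    have hin : ∀ ω, (inner 𝕜 ((WithLp.equiv 2 (H₁ × H₂)).symm (F₁ ω, F₂ ω)) x : 𝕜)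
        = inner 𝕜 (F₁ ω) u := by
      intro ω
      simp [hx, WithLp.prod_inner_apply]
    have hn : ‖x‖ ^ 2 = ‖u‖ ^ 2 := by
      rw [WithLp.prod_norm_sq_eq_of_L2]
      simp [hx]
    have hadj : ‖ContinuousLinearMap.adjoint (prodOp K₁ K₂) x‖ ^ 2
        = ‖ContinuousLinearMap.adjoint K₁ u‖ ^ 2 := by
      rw [adjoint_prodOp, WithLp.prod_norm_sq_eq_of_L2, prodOp_fst, prodOp_snd]
      simp [hx]
    obtain ⟨h1, h2⟩ := hframe x
    have hm := hmeas x
    simp only [hin] at h1 h2 hm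
    rw [hadj] at h1
    rw [hn] at h2
    exact ⟨hm, h1, h2⟩
  · intro v
    set x : WithLp 2 (H₁ × H₂) := (WithLp.equiv 2 (H₁ × H₂)).symm (0, v) with hx
    have hin : ∀ ω, (inner 𝕜 ((WithLp.equiv 2 (H₁ × H₂)).symm (F₁ ω, F₂ ω)) x : 𝕜)
        = inner 𝕜 (F₂ ω) v := by
      intro ω
      simp [hx, WithLp.prod_inner_apply]
    have hn : ‖x‖ ^ 2 = ‖v‖ ^ 2 := by
      rw [WithLp.prod_norm_sq_eq_of_L2]
      simp [hx]
    have hadj : ‖ContinuousLinearMap.adjoint (prodOp K₁ K₂) x‖ ^ 2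
        = ‖ContinuousLinearMap.adjoint K₂ v‖ ^ 2 := by
      rw [adjoint_prodOp, WithLp.prod_norm_sq_eq_of_L2, prodOp_fst, prodOp_snd]
      simp [hx]
    obtain ⟨h1, h2⟩ := hframe x
    have hm := hmeas x
    simp only [hin] at h1 h2 hm
    rw [hadj] at h1
    rw [hn] at h2
    exact ⟨hm, h1, h2⟩
end

section
/- Let (Ω, μ) be a measure space admitting a countable measurable partition {Ωₙ}ₙ∈ℕ of Ω (pairwise disjoint measurable sets with ⋃ₙ Ωₙ = Ω) with 0 < μ(Ωₙ) < ∞ for every n, and let H be a Hilbert space over 𝕜 with a Hilbert (orthonormal) basis (eₙ)ₙ∈ℕ. Then there exists a map F : Ω → H (namely F ω = (1/√μ(Ωₙ))·eₙ for ω ∈ Ωₙ) such that for every u ∈ H the function ω ↦ ⟪F ω, u⟫ is measurable and ∫_Ω |⟪F ω, u⟫|² dμ(ω) = ‖u‖²; that is, F is a Parseval continuous frame for H. -/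
open MeasureTheory ContinuousLinearMap

/-- If `(Ω, μ)` admits a countable measurable partition `{Ωₙ}` with `0 < μ Ωₙ < ∞`
and `H` has a Hilbert basis `(eₙ)ₙ∈ℕ`, then the map `F` with `F ω = μ(Ωₙ)^(-1/2) • eₙ`
for `ω ∈ Ωₙ` is a Parseval continuous frame for `H`:
`∫ |⟪F ω, u⟫|² dμ = ‖u‖²` for all `u`. -/
theorem exists_parseval_continuous_frame
    {𝕜 : Type*} [RCLike 𝕜] [MeasurableSpace 𝕜] [BorelSpace 𝕜]
    {H : Type*} [NormedAddCommGroup H] [InnerProductSpace 𝕜 H] [CompleteSpace H]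
    {Ω : Type*} [MeasurableSpace Ω] (μ : Measure Ω)
    (s : ℕ → Set Ω) (hmeas : ∀ n, MeasurableSet (s n))
    (hdisj : Pairwise (Function.onFun Disjoint s))
    (hcover : (⋃ n, s n) = Set.univ)
    (hpos : ∀ n, 0 < μ (s n)) (hfin : ∀ n, μ (s n) < ⊤)
    (b : HilbertBasis ℕ 𝕜 H) :
    ∃ F : Ω → H,
      (∀ n, ∀ ω ∈ s n, F ω = ((Real.sqrt ((μ (s n)).toReal))⁻¹ : 𝕜) • b n) ∧
      ∀ u : H, Measurable (fun ω => (inner 𝕜 (F ω) u : 𝕜)) ∧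
        ∫ ω, ‖(inner 𝕜 (F ω) u : 𝕜)‖ ^ 2 ∂μ = ‖u‖ ^ 2 := by
  classical
  -- index function
  have hex : ∀ ω : Ω, ∃ n, ω ∈ s n := by
    intro ω
    have : ω ∈ ⋃ n, s n := by rw [hcover]; trivial
    exact Set.mem_iUnion.mp this
  set idx : Ω → ℕ := fun ω => (hex ω).choose with hidx_def
  have hidx_mem : ∀ ω, ω ∈ s (idx ω) := fun ω => (hex ω).choose_spec
  have hidx : ∀ n, ∀ ω ∈ s n, idx ω = n := by
    intro n ω hω
    by_contra h
    exact (hdisj h).le_bot ⟨hidx_mem ω, hω⟩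
  set c : ℕ → 𝕜 := fun n => ((Real.sqrt ((μ (s n)).toReal))⁻¹ : 𝕜) with hc
  refine ⟨fun ω => c (idx ω) • b (idx ω), ?_, ?_⟩
  · intro n ω hω
    show c (idx ω) • b (idx ω) = _
    rw [hidx n ω hω]
  intro u
  have hidx_meas : Measurable idx := by
    apply measurable_to_countable'
    intro n
    have : idx ⁻¹' {n} = s n := by
      ext ω
      simp only [Set.mem_preimage, Set.mem_singleton_iff]
      constructor
      · rintro rfl; exact hidx_mem ω
      · intro h; exact hidx n ω h
    rw [this]; exact hmeas n
  have hinner : (fun ω => (inner 𝕜 (c (idx ω) • b (idx ω)) u : 𝕜)) =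
      (fun n => (inner 𝕜 (c n • b n) u : 𝕜)) ∘ idx := rfl
  have hmeas_inner : Measurable (fun ω => (inner 𝕜 (c (idx ω) • b (idx ω)) u : 𝕜)) := by
    rw [hinner]; exact (measurable_from_nat).comp hidx_meas
  refine ⟨hmeas_inner, ?_⟩
  -- nonnegative function
  set f : Ω → ℝ := fun ω => ‖(inner 𝕜 (c (idx ω) • b (idx ω)) u : 𝕜)‖ ^ 2 with hf
  have hf_nonneg : ∀ ω, 0 ≤ f ω := fun ω => sq_nonneg _
  have hf_meas : Measurable f := (hmeas_inner.norm.pow_const 2)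
  -- value on each piece
  have hval : ∀ n, ∀ ω ∈ s n, f ω = ((μ (s n)).toReal)⁻¹ * ‖(inner 𝕜 (b n) u : 𝕜)‖ ^ 2 := by
    intro n ω hω
    have h1 : idx ω = n := hidx n ω hω
    show ‖(inner 𝕜 (c (idx ω) • b (idx ω)) u : 𝕜)‖ ^ 2 = _
    rw [h1]
    simp only [inner_smul_left, hc, norm_mul, mul_pow, RCLike.norm_conj, norm_inv,
      RCLike.norm_ofReal, abs_of_nonneg (Real.sqrt_nonneg _), inv_pow,
      Real.sq_sqrt ENNReal.toReal_nonneg]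
  -- lintegral computation
  have hlint : ∫⁻ ω, ENNReal.ofReal (f ω) ∂μ = ENNReal.ofReal (‖u‖ ^ 2) := by
    have hrestrict : ∫⁻ ω, ENNReal.ofReal (f ω) ∂μ
        = ∑' n, ∫⁻ ω in s n, ENNReal.ofReal (f ω) ∂μ := by
      rw [← lintegral_iUnion hmeas hdisj, hcover, Measure.restrict_univ]
    have hpiece : ∀ n, ∫⁻ ω in s n, ENNReal.ofReal (f ω) ∂μ
        = ENNReal.ofReal (‖(inner 𝕜 (b n) u : 𝕜)‖ ^ 2) := by
      intro n
      have : ∫⁻ ω in s n, ENNReal.ofReal (f ω) ∂μ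
          = ∫⁻ _ in s n, ENNReal.ofReal (((μ (s n)).toReal)⁻¹ * ‖(inner 𝕜 (b n) u : 𝕜)‖ ^ 2) ∂μ := by
        apply setLIntegral_congr_fun (hmeas n)
        exact fun ω hω => by rw [hval n ω hω]
      rw [this, lintegral_const, Measure.restrict_apply MeasurableSet.univ,
        Set.univ_inter, ENNReal.ofReal_mul (by positivity)]
      have htr : ENNReal.ofReal (((μ (s n)).toReal)⁻¹) = (μ (s n))⁻¹ := by
        rw [ENNReal.ofReal_inv_of_pos (ENNReal.toReal_pos (hpos n).ne' (hfin n).ne),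
          ENNReal.ofReal_toReal (hfin n).ne]
      rw [htr, mul_comm (μ (s n))⁻¹ _, mul_assoc,
        ENNReal.inv_mul_cancel (hpos n).ne' (hfin n).ne, mul_one]
    rw [hrestrict]
    simp_rw [hpiece]
    -- Parseval
    have hsum : HasSum (fun n => ‖(inner 𝕜 (b n) u : 𝕜)‖ ^ 2) (‖u‖ ^ 2) := by
      have h := b.hasSum_inner_mul_inner u u
      have h2 : (fun i => (inner 𝕜 u (b i) : 𝕜) * inner 𝕜 (b i) u)
          = fun i => ((‖(inner 𝕜 (b i) u : 𝕜)‖ ^ 2 : ℝ) : 𝕜) := by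
        funext i
        rw [← inner_conj_symm u (b i), RCLike.conj_mul]
        norm_cast
      rw [h2, inner_self_eq_norm_sq_to_K] at h
      have h3 := (RCLike.reCLM (K := 𝕜)).hasSum h
      simp only [RCLike.reCLM_apply, RCLike.ofReal_re] at h3
      rw [← RCLike.ofReal_pow, RCLike.ofReal_re] at h3
      exact h3
    rw [← ENNReal.ofReal_tsum_of_nonneg (fun n => by positivity) hsum.summable,
      hsum.tsum_eq]
  -- Bochner integral
  have := integral_eq_lintegral_of_nonneg_ae (μ := μ) (f := f)
    (Filter.Eventually.of_forall hf_nonneg) hf_meas.aestronglyMeasurable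
  rw [this, hlint, ENNReal.toReal_ofReal (by positivity)]
end

section
/- Let K₁ ∈ B(H₁), K₂ ∈ B(H₂), let F₁ : Ω → H₁ and F₂ : Ω → H₂ be Bessel mappings with transform operators θ₁, θ₂ and pre-frame operators T₁ = θ₁*, T₂ = θ₂*, and suppose F₁ ⊕ F₂ is a continuous (K₁ ⊕ K₂)-frame for H₁ ⊕ H₂ (with some positive bounds). Then: (1) if T₁ is injective, then K₂ = 0; (2) if T₂ is injective, then K₁ = 0; (3) if both T₁ and T₂ are injective, then K₁ = 0 and K₂ = 0. -/
open MeasureTheory ContinuousLinearMap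

section Helpers

open MeasureTheory ContinuousLinearMap

variable {𝕜 : Type*} [RCLike 𝕜]

lemma my_denseRange_of_injective_adjoint
    {E F : Type*} [NormedAddCommGroup E] [InnerProductSpace 𝕜 E] [CompleteSpace E]
    [NormedAddCommGroup F] [InnerProductSpace 𝕜 F] [CompleteSpace F]
    (A : E →L[𝕜] F) (h : Function.Injective ⇑(adjoint A)) : DenseRange ⇑A := by
  have horth : (LinearMap.range (A : E →ₗ[𝕜] F) : Submodule 𝕜 F)ᗮ = ⊥ := by
    rw [Submodule.eq_bot_iff]
    intro x hx
    have hAx : adjoint A x = 0 := by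
      rw [← inner_self_eq_zero (𝕜 := 𝕜), adjoint_inner_left, ← inner_conj_symm,
        hx (A (adjoint A x)) ⟨_, rfl⟩, map_zero]
    exact h (by simpa using hAx : adjoint A x = adjoint A 0)
  have hcl : (LinearMap.range (A : E →ₗ[𝕜] F) : Submodule 𝕜 F).topologicalClosure = ⊤ :=
    Submodule.topologicalClosure_eq_top_iff.mpr horth
  have hd : Dense ((LinearMap.range (A : E →ₗ[𝕜] F) : Submodule 𝕜 F) : Set F) := by
    rw [dense_iff_closure_eq, ← Submodule.topologicalClosure_coe, hcl]
    rfl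
  simpa [DenseRange, LinearMap.coe_range] using hd

lemma my_integral_norm_sq_eq {Ω : Type*} [MeasurableSpace Ω] {μ : Measure Ω}
    (f : Lp 𝕜 2 μ) : ∫ ω, ‖f ω‖ ^ 2 ∂μ = ‖f‖ ^ 2 := by
  rw [norm_sq_eq_re_inner (𝕜 := 𝕜) f, L2.inner_def,
    ← integral_re (L2.integrable_inner f f)]
  congr 1
  ext ω
  rw [← inner_self_eq_norm_sq (𝕜 := 𝕜)]

lemma my_prodOp_apply
    {H₁ : Type*} [NormedAddCommGroup H₁] [InnerProductSpace 𝕜 H₁]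
    {H₂ : Type*} [NormedAddCommGroup H₂] [InnerProductSpace 𝕜 H₂]
    (K₁ : H₁ →L[𝕜] H₁) (K₂ : H₂ →L[𝕜] H₂) (x : WithLp 2 (H₁ × H₂)) :
    prodOp K₁ K₂ x = (WithLp.equiv 2 (H₁ × H₂)).symm (K₁ x.fst, K₂ x.snd) := by
  simp only [prodOp, coe_comp', ContinuousLinearEquiv.coe_coe, Function.comp_apply,
    WithLp.prodContinuousLinearEquiv_apply, WithLp.prodContinuousLinearEquiv_symm_apply,
    coe_prodMap', Prod.map_apply, WithLp.equiv_apply, WithLp.ofLp_fst, WithLp.ofLp_snd]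
  rfl

lemma my_adjoint_prodOp
    {H₁ : Type*} [NormedAddCommGroup H₁] [InnerProductSpace 𝕜 H₁] [CompleteSpace H₁]
    {H₂ : Type*} [NormedAddCommGroup H₂] [InnerProductSpace 𝕜 H₂] [CompleteSpace H₂]
    (K₁ : H₁ →L[𝕜] H₁) (K₂ : H₂ →L[𝕜] H₂) :
    adjoint (prodOp K₁ K₂) = prodOp (adjoint K₁) (adjoint K₂) := by
  symm
  rw [eq_adjoint_iff]
  intro x y
  simp [prodOp, WithLp.prod_inner_apply, adjoint_inner_left, adjoint_inner_right]

end Helpers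

set_option maxHeartbeats 1000000 in
/-- If `F₁, F₂` are Bessel mappings with pre-frame operators `T₁ = θ₁*`, `T₂ = θ₂*`, and
`F₁ ⊕ F₂` is a continuous `(K₁ ⊕ K₂)`-frame, then: (1) if `T₁` is injective (`F₁` is
minimal) then `K₂ = 0`; (2) if `T₂` is injective then `K₁ = 0`; (3) if both are
injective then `K₁ = 0` and `K₂ = 0`. -/
theorem prod_K_frame_minimal_components
    {𝕜 : Type*} [RCLike 𝕜] [MeasurableSpace 𝕜] [BorelSpace 𝕜]
    {H₁ : Type*} [NormedAddCommGroup H₁] [InnerProductSpace 𝕜 H₁] [CompleteSpace H₁]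
    {H₂ : Type*} [NormedAddCommGroup H₂] [InnerProductSpace 𝕜 H₂] [CompleteSpace H₂]
    {Ω : Type*} [MeasurableSpace Ω] {μ : Measure Ω}
    (K₁ : H₁ →L[𝕜] H₁) (K₂ : H₂ →L[𝕜] H₂)
    (F₁ : Ω → H₁) (F₂ : Ω → H₂) (B₁ B₂ : ℝ) (hB₁ : 0 < B₁) (hB₂ : 0 < B₂)
    (hbessel₁ : ∀ u : H₁, Measurable (fun ω => (inner 𝕜 (F₁ ω) u : 𝕜)) ∧
      ∫ ω, ‖(inner 𝕜 (F₁ ω) u : 𝕜)‖ ^ 2 ∂μ ≤ B₁ * ‖u‖ ^ 2)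
    (hbessel₂ : ∀ v : H₂, Measurable (fun ω => (inner 𝕜 (F₂ ω) v : 𝕜)) ∧
      ∫ ω, ‖(inner 𝕜 (F₂ ω) v : 𝕜)‖ ^ 2 ∂μ ≤ B₂ * ‖v‖ ^ 2)
    (θ₁ : H₁ →L[𝕜] Lp 𝕜 2 μ)
    (hθ₁ : ∀ u : H₁, (θ₁ u : Ω → 𝕜) =ᵐ[μ] fun ω => (inner 𝕜 (F₁ ω) u : 𝕜))
    (θ₂ : H₂ →L[𝕜] Lp 𝕜 2 μ)
    (hθ₂ : ∀ v : H₂, (θ₂ v : Ω → 𝕜) =ᵐ[μ] fun ω => (inner 𝕜 (F₂ ω) v : 𝕜))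
    (hframe : ∃ A B : ℝ, 0 < A ∧ A ≤ B ∧ ∀ x : WithLp 2 (H₁ × H₂),
      A * ‖ContinuousLinearMap.adjoint (prodOp K₁ K₂) x‖ ^ 2 ≤
        ∫ ω, ‖(inner 𝕜 ((WithLp.equiv 2 (H₁ × H₂)).symm (F₁ ω, F₂ ω)) x : 𝕜)‖ ^ 2 ∂μ ∧
      ∫ ω, ‖(inner 𝕜 ((WithLp.equiv 2 (H₁ × H₂)).symm (F₁ ω, F₂ ω)) x : 𝕜)‖ ^ 2 ∂μ ≤
        B * ‖x‖ ^ 2) :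
    (Function.Injective ⇑(ContinuousLinearMap.adjoint θ₁) → K₂ = 0) ∧
    (Function.Injective ⇑(ContinuousLinearMap.adjoint θ₂) → K₁ = 0) ∧
    (Function.Injective ⇑(ContinuousLinearMap.adjoint θ₁) →
      Function.Injective ⇑(ContinuousLinearMap.adjoint θ₂) → K₁ = 0 ∧ K₂ = 0) := by
  classical
  obtain ⟨A, B, hA, hAB, hf⟩ := hframe
  -- the integral identity
  have hkey : ∀ (u : H₁) (v : H₂),
      ∫ ω, ‖(inner 𝕜 ((WithLp.equiv 2 (H₁ × H₂)).symm (F₁ ω, F₂ ω))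
        ((WithLp.equiv 2 (H₁ × H₂)).symm (u, v)) : 𝕜)‖ ^ 2 ∂μ = ‖θ₁ u + θ₂ v‖ ^ 2 := by
    intro u v
    rw [← my_integral_norm_sq_eq (θ₁ u + θ₂ v)]
    refine integral_congr_ae ?_
    filter_upwards [hθ₁ u, hθ₂ v, Lp.coeFn_add (θ₁ u) (θ₂ v)] with ω h1 h2 h3
    rw [h3]
    simp only [WithLp.prod_inner_apply, WithLp.equiv_symm_apply, WithLp.toLp_fst, WithLp.toLp_snd,
      Pi.add_apply, h1, h2]
  -- the adjoint norm identity
  have hadj : ∀ (u : H₁) (v : H₂),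
      ‖ContinuousLinearMap.adjoint (prodOp K₁ K₂) ((WithLp.equiv 2 (H₁ × H₂)).symm (u, v))‖ ^ 2
        = ‖ContinuousLinearMap.adjoint K₁ u‖ ^ 2 + ‖ContinuousLinearMap.adjoint K₂ v‖ ^ 2 := by
    intro u v
    rw [my_adjoint_prodOp]
    have hrw : prodOp (ContinuousLinearMap.adjoint K₁) (ContinuousLinearMap.adjoint K₂)
        ((WithLp.equiv 2 (H₁ × H₂)).symm (u, v))
        = (WithLp.equiv 2 (H₁ × H₂)).symm
            (ContinuousLinearMap.adjoint K₁ u, ContinuousLinearMap.adjoint K₂ v) := by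
      rw [my_prodOp_apply]
      simp
    rw [hrw, WithLp.prod_norm_sq_eq_of_L2]
    simp
  -- main estimate
  have main : ∀ (u : H₁) (v : H₂),
      A * (‖ContinuousLinearMap.adjoint K₁ u‖ ^ 2 + ‖ContinuousLinearMap.adjoint K₂ v‖ ^ 2)
        ≤ ‖θ₁ u + θ₂ v‖ ^ 2 := by
    intro u v
    have h1 := (hf ((WithLp.equiv 2 (H₁ × H₂)).symm (u, v))).1
    rwa [hkey u v, hadj u v] at h1
  have claim₁ : Function.Injective ⇑(ContinuousLinearMap.adjoint θ₁) → K₂ = 0 := by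
    intro hinj
    have hdr : DenseRange ⇑θ₁ := my_denseRange_of_injective_adjoint θ₁ hinj
    have hK : ContinuousLinearMap.adjoint K₂ = 0 := by
      ext v
      rw [ContinuousLinearMap.zero_apply, ← norm_eq_zero]
      have hle : ∀ ε : ℝ, 0 < ε → ‖ContinuousLinearMap.adjoint K₂ v‖ ^ 2 ≤ ε := by
        intro ε hε
        obtain ⟨u, hu⟩ := hdr.exists_dist_lt (-(θ₂ v)) (Real.sqrt_pos.mpr (mul_pos hA hε))
        have hdist : ‖θ₁ u + θ₂ v‖ < Real.sqrt (A * ε) := by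
          rwa [dist_eq_norm, show -(θ₂ v) - θ₁ u = -(θ₁ u + θ₂ v) by abel, norm_neg] at hu
        have hsq : ‖θ₁ u + θ₂ v‖ ^ 2 < A * ε := by
          have := Real.sq_sqrt (le_of_lt (mul_pos hA hε))
          nlinarith [norm_nonneg (θ₁ u + θ₂ v), Real.sqrt_nonneg (A * ε)]
        have := main u v
        have h0 : A * ‖ContinuousLinearMap.adjoint K₂ v‖ ^ 2 ≤ A * ε := by
          nlinarith [norm_nonneg (ContinuousLinearMap.adjoint K₁ u), sq_nonneg
            (‖ContinuousLinearMap.adjoint K₁ u‖)]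
        exact le_of_mul_le_mul_left h0 hA
      have h0 : ‖ContinuousLinearMap.adjoint K₂ v‖ ^ 2 ≤ 0 := by
        by_contra h
        push_neg at h
        have := hle (‖ContinuousLinearMap.adjoint K₂ v‖ ^ 2 / 2) (by linarith)
        linarith
      nlinarith [norm_nonneg (ContinuousLinearMap.adjoint K₂ v)]
    rw [← adjoint_adjoint K₂, hK]
    exact map_zero _
  have claim₂ : Function.Injective ⇑(ContinuousLinearMap.adjoint θ₂) → K₁ = 0 := by
    intro hinj
    have hdr : DenseRange ⇑θ₂ := my_denseRange_of_injective_adjoint θ₂ hinj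
    have hK : ContinuousLinearMap.adjoint K₁ = 0 := by
      ext u
      rw [ContinuousLinearMap.zero_apply, ← norm_eq_zero]
      have hle : ∀ ε : ℝ, 0 < ε → ‖ContinuousLinearMap.adjoint K₁ u‖ ^ 2 ≤ ε := by
        intro ε hε
        obtain ⟨v, hv⟩ := hdr.exists_dist_lt (-(θ₁ u)) (Real.sqrt_pos.mpr (mul_pos hA hε))
        have hdist : ‖θ₁ u + θ₂ v‖ < Real.sqrt (A * ε) := by
          rwa [dist_eq_norm, show -(θ₁ u) - θ₂ v = -(θ₁ u + θ₂ v) by abel, norm_neg] at hv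
        have hsq : ‖θ₁ u + θ₂ v‖ ^ 2 < A * ε := by
          have := Real.sq_sqrt (le_of_lt (mul_pos hA hε))
          nlinarith [norm_nonneg (θ₁ u + θ₂ v), Real.sqrt_nonneg (A * ε)]
        have := main u v
        have h0 : A * ‖ContinuousLinearMap.adjoint K₁ u‖ ^ 2 ≤ A * ε := by
          nlinarith [norm_nonneg (ContinuousLinearMap.adjoint K₂ v), sq_nonneg
            (‖ContinuousLinearMap.adjoint K₂ v‖)]
        exact le_of_mul_le_mul_left h0 hA
      have h0 : ‖ContinuousLinearMap.adjoint K₁ u‖ ^ 2 ≤ 0 := by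
        by_contra h
        push_neg at h
        have := hle (‖ContinuousLinearMap.adjoint K₁ u‖ ^ 2 / 2) (by linarith)
        linarith
      nlinarith [norm_nonneg (ContinuousLinearMap.adjoint K₁ u)]
    rw [← adjoint_adjoint K₁, hK]
    exact map_zero _
  exact ⟨claim₁, claim₂, fun h1 h2 => ⟨claim₂ h2, claim₁ h1⟩⟩
end

section
/- Let K₁ ∈ B(H₁), K₂ ∈ B(H₂), let F₁ : Ω → H₁ be a continuous K₁-frame with bounds 0 < A₁ ≤ B₁ and F₂ : Ω → H₂ a continuous K₂-frame with bounds 0 < A₂ ≤ B₂, with transform operators θ₁, θ₂, and let θ be the transform operator of F₁ ⊕ F₂. If the topological closure of range θ₁ equals the orthogonal complement (range θ₂)ᗮ in L²(Ω, 𝕜), then F₁ ⊕ F₂ is a continuous (K₁ ⊕ K₂)-frame for H₁ ⊕ H₂ (with some positive bounds) and its pre-frame operator T = θ* is injective (i.e. F₁ ⊕ F₂ is a minimal continuous (K₁ ⊕ K₂)-frame). -/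
open MeasureTheory ContinuousLinearMap

/-- The integral of the squared norm of an a.e. representative of an `L²` element equals the
squared `L²`-norm. -/
lemma integral_norm_sq_eq_norm_sq {𝕜 : Type*} [RCLike 𝕜]
    {Ω : Type*} [MeasurableSpace Ω] {μ : Measure Ω}
    (f : Lp 𝕜 2 μ) (g : Ω → 𝕜) (h : (f : Ω → 𝕜) =ᵐ[μ] g) :
    ∫ ω, ‖g ω‖ ^ 2 ∂μ = ‖f‖ ^ 2 := by
  have h1 : ∫ ω, ‖g ω‖ ^ 2 ∂μ = ∫ ω, ‖(f : Ω → 𝕜) ω‖ ^ 2 ∂μ :=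
    integral_congr_ae (h.mono fun ω hω => by simp only [hω])
  have h2 : ‖f‖ ^ 2 = RCLike.re (inner 𝕜 f f) :=
    (inner_self_eq_norm_sq (𝕜 := 𝕜) f).symm
  rw [h1, h2, L2.inner_def, ← integral_re (L2.integrable_inner (𝕜 := 𝕜) f f)]
  refine integral_congr_ae (Filter.Eventually.of_forall fun ω => ?_)
  exact (inner_self_eq_norm_sq (𝕜 := 𝕜) _).symm

lemma prodOp_adjoint {𝕜 : Type*} [RCLike 𝕜]
    {H₁ : Type*} [NormedAddCommGroup H₁] [InnerProductSpace 𝕜 H₁] [CompleteSpace H₁]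
    {H₂ : Type*} [NormedAddCommGroup H₂] [InnerProductSpace 𝕜 H₂] [CompleteSpace H₂]
    (K₁ : H₁ →L[𝕜] H₁) (K₂ : H₂ →L[𝕜] H₂) :
    prodOp (ContinuousLinearMap.adjoint K₁) (ContinuousLinearMap.adjoint K₂) =
      ContinuousLinearMap.adjoint (prodOp K₁ K₂) := by
  rw [ContinuousLinearMap.eq_adjoint_iff]
  intro x y
  have h1 : ∀ (z : WithLp 2 (H₁ × H₂)) (L₁ : H₁ →L[𝕜] H₁) (L₂ : H₂ →L[𝕜] H₂),
      (prodOp L₁ L₂ z).ofLp.1 = L₁ z.ofLp.1 ∧ (prodOp L₁ L₂ z).ofLp.2 = L₂ z.ofLp.2 :=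
    fun z L₁ L₂ => ⟨rfl, rfl⟩
  rw [WithLp.prod_inner_apply, WithLp.prod_inner_apply,
    (h1 x _ _).1, (h1 x _ _).2, (h1 y _ _).1, (h1 y _ _).2,
    ContinuousLinearMap.adjoint_inner_left, ContinuousLinearMap.adjoint_inner_left]

/-- If `F₁` is a continuous `K₁`-frame, `F₂` a continuous `K₂`-frame, with transform
operators `θ₁, θ₂`, `θ` is the transform operator of `F₁ ⊕ F₂`, and the closure of
`range θ₁` equals `(range θ₂)ᗮ` in `L²(Ω, 𝕜)`, then `F₁ ⊕ F₂` is a continuous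
`(K₁ ⊕ K₂)`-frame (for some positive bounds) and its pre-frame operator `T = θ*` is
injective, i.e. `F₁ ⊕ F₂` is a minimal continuous `(K₁ ⊕ K₂)`-frame. -/
theorem prod_K_frame_minimal_of_closure_range_eq_orthogonal
    {𝕜 : Type*} [RCLike 𝕜] [MeasurableSpace 𝕜] [BorelSpace 𝕜]
    {H₁ : Type*} [NormedAddCommGroup H₁] [InnerProductSpace 𝕜 H₁] [CompleteSpace H₁]
    {H₂ : Type*} [NormedAddCommGroup H₂] [InnerProductSpace 𝕜 H₂] [CompleteSpace H₂]
    {Ω : Type*} [MeasurableSpace Ω] {μ : Measure Ω}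
    (K₁ : H₁ →L[𝕜] H₁) (K₂ : H₂ →L[𝕜] H₂)
    (F₁ : Ω → H₁) (F₂ : Ω → H₂)
    (A₁ B₁ A₂ B₂ : ℝ) (hA₁ : 0 < A₁) (hA₁B₁ : A₁ ≤ B₁) (hA₂ : 0 < A₂) (hA₂B₂ : A₂ ≤ B₂)
    (hmeas₁ : ∀ u : H₁, Measurable fun ω => (inner 𝕜 (F₁ ω) u : 𝕜))
    (hframe₁ : ∀ u : H₁,
      A₁ * ‖ContinuousLinearMap.adjoint K₁ u‖ ^ 2 ≤
        ∫ ω, ‖(inner 𝕜 (F₁ ω) u : 𝕜)‖ ^ 2 ∂μ ∧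
      ∫ ω, ‖(inner 𝕜 (F₁ ω) u : 𝕜)‖ ^ 2 ∂μ ≤ B₁ * ‖u‖ ^ 2)
    (hmeas₂ : ∀ v : H₂, Measurable fun ω => (inner 𝕜 (F₂ ω) v : 𝕜))
    (hframe₂ : ∀ v : H₂,
      A₂ * ‖ContinuousLinearMap.adjoint K₂ v‖ ^ 2 ≤
        ∫ ω, ‖(inner 𝕜 (F₂ ω) v : 𝕜)‖ ^ 2 ∂μ ∧
      ∫ ω, ‖(inner 𝕜 (F₂ ω) v : 𝕜)‖ ^ 2 ∂μ ≤ B₂ * ‖v‖ ^ 2)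
    (θ₁ : H₁ →L[𝕜] Lp 𝕜 2 μ)
    (hθ₁ : ∀ u : H₁, (θ₁ u : Ω → 𝕜) =ᵐ[μ] fun ω => (inner 𝕜 (F₁ ω) u : 𝕜))
    (θ₂ : H₂ →L[𝕜] Lp 𝕜 2 μ)
    (hθ₂ : ∀ v : H₂, (θ₂ v : Ω → 𝕜) =ᵐ[μ] fun ω => (inner 𝕜 (F₂ ω) v : 𝕜))
    (θ : WithLp 2 (H₁ × H₂) →L[𝕜] Lp 𝕜 2 μ)
    (hθ : ∀ x : WithLp 2 (H₁ × H₂), (θ x : Ω → 𝕜) =ᵐ[μ]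
      fun ω => (inner 𝕜 ((WithLp.equiv 2 (H₁ × H₂)).symm (F₁ ω, F₂ ω)) x : 𝕜))
    (hclosure : (LinearMap.range θ₁.toLinearMap).topologicalClosure =
      Submodule.orthogonal (LinearMap.range θ₂.toLinearMap)) :
    (∃ A B : ℝ, 0 < A ∧ A ≤ B ∧ ∀ x : WithLp 2 (H₁ × H₂),
      A * ‖ContinuousLinearMap.adjoint (prodOp K₁ K₂) x‖ ^ 2 ≤
        ∫ ω, ‖(inner 𝕜 ((WithLp.equiv 2 (H₁ × H₂)).symm (F₁ ω, F₂ ω)) x : 𝕜)‖ ^ 2 ∂μ ∧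
      ∫ ω, ‖(inner 𝕜 ((WithLp.equiv 2 (H₁ × H₂)).symm (F₁ ω, F₂ ω)) x : 𝕜)‖ ^ 2 ∂μ ≤
        B * ‖x‖ ^ 2) ∧
    Function.Injective ⇑(ContinuousLinearMap.adjoint θ) := by
  -- the key decomposition: θ x = θ₁ x.1 + θ₂ x.2
  have hdecomp : ∀ x : WithLp 2 (H₁ × H₂), θ x = θ₁ x.fst + θ₂ x.snd := by
    intro x
    refine Lp.ext ((hθ x).trans ?_)
    refine (((hθ₁ x.fst).and ((hθ₂ x.snd).and
      (Lp.coeFn_add (θ₁ x.fst) (θ₂ x.snd)))).mono fun ω ⟨h1, h2, h3⟩ => ?_)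
    rw [h3, Pi.add_apply, h1, h2]
    exact WithLp.prod_inner_apply _ _
  -- orthogonality of the ranges
  have horth : ∀ (u : H₁) (v : H₂), (inner 𝕜 (θ₁ u) (θ₂ v)) = 0 := by
    intro u v
    have h1 : θ₁ u ∈ (LinearMap.range θ₂.toLinearMap)ᗮ := by
      rw [← hclosure]
      exact (LinearMap.range θ₁.toLinearMap).le_topologicalClosure ⟨u, rfl⟩
    have := (Submodule.mem_orthogonal _ _).1 h1 (θ₂ v) ⟨v, rfl⟩
    rw [← inner_conj_symm, this, map_zero]
  -- the integral identity
  have hint : ∀ x : WithLp 2 (H₁ × H₂),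
      ∫ ω, ‖(inner 𝕜 ((WithLp.equiv 2 (H₁ × H₂)).symm (F₁ ω, F₂ ω)) x : 𝕜)‖ ^ 2 ∂μ =
        (∫ ω, ‖(inner 𝕜 (F₁ ω) x.fst : 𝕜)‖ ^ 2 ∂μ) + ∫ ω, ‖(inner 𝕜 (F₂ ω) x.snd : 𝕜)‖ ^ 2 ∂μ := by
    intro x
    rw [integral_norm_sq_eq_norm_sq (θ x) _ (hθ x),
      integral_norm_sq_eq_norm_sq (θ₁ x.fst) _ (hθ₁ x.fst),
      integral_norm_sq_eq_norm_sq (θ₂ x.snd) _ (hθ₂ x.snd), hdecomp x]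
    rw [sq, sq, sq]
    exact norm_add_sq_eq_norm_sq_add_norm_sq_of_inner_eq_zero _ _ (horth x.fst x.snd)
  constructor
  · refine ⟨min A₁ A₂, B₁ + B₂, lt_min hA₁ hA₂,
      le_trans (min_le_left _ _) (le_trans hA₁B₁ (le_add_of_nonneg_right (hA₂.trans_le hA₂B₂).le)),
      fun x => ?_⟩
    have hadj : ‖ContinuousLinearMap.adjoint (prodOp K₁ K₂) x‖ ^ 2 =
        ‖ContinuousLinearMap.adjoint K₁ x.fst‖ ^ 2 +
          ‖ContinuousLinearMap.adjoint K₂ x.snd‖ ^ 2 := by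
      rw [← prodOp_adjoint]
      exact WithLp.prod_norm_sq_eq_of_L2 _
    have hx : ‖x‖ ^ 2 = ‖x.fst‖ ^ 2 + ‖x.snd‖ ^ 2 := WithLp.prod_norm_sq_eq_of_L2 x
    obtain ⟨hl₁, hu₁⟩ := hframe₁ x.fst
    obtain ⟨hl₂, hu₂⟩ := hframe₂ x.snd
    rw [hint x, hadj, hx]
    constructor
    · have m1 : min A₁ A₂ ≤ A₁ := min_le_left _ _
      have m2 : min A₁ A₂ ≤ A₂ := min_le_right _ _
      nlinarith [sq_nonneg ‖ContinuousLinearMap.adjoint K₁ x.fst‖,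
        sq_nonneg ‖ContinuousLinearMap.adjoint K₂ x.snd‖]
    · nlinarith [sq_nonneg ‖x.fst‖, sq_nonneg ‖x.snd‖, hA₁.trans_le hA₁B₁, hA₂.trans_le hA₂B₂]
  · -- injectivity of the adjoint
    have key : ∀ w : Lp 𝕜 2 μ, ContinuousLinearMap.adjoint θ w = 0 → w = 0 := by
      intro w hw
      have hθw : ∀ x : WithLp 2 (H₁ × H₂), (inner 𝕜 (θ x) w) = 0 := by
        intro x
        rw [← ContinuousLinearMap.adjoint_inner_right θ, hw, inner_zero_right]
      have hw1 : w ∈ (LinearMap.range θ₁.toLinearMap)ᗮ := by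
        rw [Submodule.mem_orthogonal]
        rintro f ⟨u, rfl⟩
        have := hθw ((WithLp.equiv 2 (H₁ × H₂)).symm (u, 0))
        rwa [hdecomp, (show ((WithLp.equiv 2 (H₁ × H₂)).symm (u, 0)).fst = u from rfl), (show ((WithLp.equiv 2 (H₁ × H₂)).symm (u, 0)).snd = 0 from rfl), map_zero, add_zero] at this
      have hw2 : w ∈ (LinearMap.range θ₂.toLinearMap)ᗮ := by
        rw [Submodule.mem_orthogonal]
        rintro f ⟨v, rfl⟩
        have := hθw ((WithLp.equiv 2 (H₁ × H₂)).symm (0, v))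
        rwa [hdecomp, (show ((WithLp.equiv 2 (H₁ × H₂)).symm (0, v)).fst = 0 from rfl), (show ((WithLp.equiv 2 (H₁ × H₂)).symm (0, v)).snd = v from rfl), map_zero, zero_add] at this
      have hw3 : w ∈ (LinearMap.range θ₁.toLinearMap)ᗮᗮ := by
        rw [← hclosure] at hw2
        exact Submodule.topologicalClosure_minimal _
          (Submodule.le_orthogonal_orthogonal _) (Submodule.isClosed_orthogonal _) hw2
      have : (inner 𝕜 w w) = 0 := (Submodule.mem_orthogonal _ _).1 hw3 w hw1
      exact inner_self_eq_zero.1 this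
    intro y z h
    have h0 : ContinuousLinearMap.adjoint θ (y - z) = 0 := by rw [map_sub, h, sub_self]
    exact sub_eq_zero.1 (key _ h0)
end

section
/- Let K₁ ∈ B(H₁), K₂ ∈ B(H₂), let F₁ : Ω → H₁ and F₂ : Ω → H₂ be Bessel mappings with transform operators θ₁, θ₂, let θ be the transform operator of the continuous (K₁ ⊕ K₂)-frame F₁ ⊕ F₂, and set T = θ*, T₁ = θ₁*, T₂ = θ₂*. If G₁ ∈ B(H₁, L²(Ω, 𝕜)) and G₂ ∈ B(H₂, L²(Ω, 𝕜)) are such that G₁ ⊕ G₂ is a (K₁ ⊕ K₂)-dual mapping to F₁ ⊕ F₂ (i.e. K₁ ⊕ K₂ = T ∘ (G₁ ⊕ G₂)), then G₁ is a K₁-dual mapping to F₁ (i.e. K₁ = T₁ ∘ G₁) and G₂ is a K₂-dual mapping to F₂ (i.e. K₂ = T₂ ∘ G₂). -/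
open MeasureTheory ContinuousLinearMap

/-- The operator `G₁ ⊕ G₂ : H₁ ⊕ H₂ →L E` mapping `(u, v)` to `G₁ u + G₂ v`. -/
noncomputable def coprodOp {𝕜 : Type*} [RCLike 𝕜]
    {H₁ : Type*} [NormedAddCommGroup H₁] [InnerProductSpace 𝕜 H₁]
    {H₂ : Type*} [NormedAddCommGroup H₂] [InnerProductSpace 𝕜 H₂]
    {E : Type*} [NormedAddCommGroup E] [NormedSpace 𝕜 E]
    (G₁ : H₁ →L[𝕜] E) (G₂ : H₂ →L[𝕜] E) : WithLp 2 (H₁ × H₂) →L[𝕜] E :=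
  (G₁.coprod G₂).comp (WithLp.prodContinuousLinearEquiv 2 𝕜 H₁ H₂).toContinuousLinearMap

/-- If `G₁ ⊕ G₂` is a `(K₁ ⊕ K₂)`-dual mapping to the continuous `(K₁ ⊕ K₂)`-frame
`F₁ ⊕ F₂` (i.e. `K₁ ⊕ K₂ = T ∘ (G₁ ⊕ G₂)` with `T = θ*`), then `G₁` is a `K₁`-dual
mapping to `F₁` and `G₂` is a `K₂`-dual mapping to `F₂`. -/
theorem prod_dual_components
    {𝕜 : Type*} [RCLike 𝕜] [MeasurableSpace 𝕜] [BorelSpace 𝕜]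
    {H₁ : Type*} [NormedAddCommGroup H₁] [InnerProductSpace 𝕜 H₁] [CompleteSpace H₁]
    {H₂ : Type*} [NormedAddCommGroup H₂] [InnerProductSpace 𝕜 H₂] [CompleteSpace H₂]
    {Ω : Type*} [MeasurableSpace Ω] {μ : Measure Ω}
    (K₁ : H₁ →L[𝕜] H₁) (K₂ : H₂ →L[𝕜] H₂)
    (F₁ : Ω → H₁) (F₂ : Ω → H₂) (B₁ B₂ : ℝ) (hB₁ : 0 < B₁) (hB₂ : 0 < B₂)
    (hbessel₁ : ∀ u : H₁, Measurable (fun ω => (inner 𝕜 (F₁ ω) u : 𝕜)) ∧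
      ∫ ω, ‖(inner 𝕜 (F₁ ω) u : 𝕜)‖ ^ 2 ∂μ ≤ B₁ * ‖u‖ ^ 2)
    (hbessel₂ : ∀ v : H₂, Measurable (fun ω => (inner 𝕜 (F₂ ω) v : 𝕜)) ∧
      ∫ ω, ‖(inner 𝕜 (F₂ ω) v : 𝕜)‖ ^ 2 ∂μ ≤ B₂ * ‖v‖ ^ 2)
    (θ₁ : H₁ →L[𝕜] Lp 𝕜 2 μ)
    (hθ₁ : ∀ u : H₁, (θ₁ u : Ω → 𝕜) =ᵐ[μ] fun ω => (inner 𝕜 (F₁ ω) u : 𝕜))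
    (θ₂ : H₂ →L[𝕜] Lp 𝕜 2 μ)
    (hθ₂ : ∀ v : H₂, (θ₂ v : Ω → 𝕜) =ᵐ[μ] fun ω => (inner 𝕜 (F₂ ω) v : 𝕜))
    (θ : WithLp 2 (H₁ × H₂) →L[𝕜] Lp 𝕜 2 μ)
    (hθ : ∀ x : WithLp 2 (H₁ × H₂), (θ x : Ω → 𝕜) =ᵐ[μ]
      fun ω => (inner 𝕜 ((WithLp.equiv 2 (H₁ × H₂)).symm (F₁ ω, F₂ ω)) x : 𝕜))
    (hframe : ∃ A B : ℝ, 0 < A ∧ A ≤ B ∧ ∀ x : WithLp 2 (H₁ × H₂),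
      A * ‖ContinuousLinearMap.adjoint (prodOp K₁ K₂) x‖ ^ 2 ≤
        ∫ ω, ‖(inner 𝕜 ((WithLp.equiv 2 (H₁ × H₂)).symm (F₁ ω, F₂ ω)) x : 𝕜)‖ ^ 2 ∂μ ∧
      ∫ ω, ‖(inner 𝕜 ((WithLp.equiv 2 (H₁ × H₂)).symm (F₁ ω, F₂ ω)) x : 𝕜)‖ ^ 2 ∂μ ≤
        B * ‖x‖ ^ 2)
    (G₁ : H₁ →L[𝕜] Lp 𝕜 2 μ) (G₂ : H₂ →L[𝕜] Lp 𝕜 2 μ)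
    (hdual : prodOp K₁ K₂ =
      (ContinuousLinearMap.adjoint θ).comp (coprodOp G₁ G₂)) :
    K₁ = (ContinuousLinearMap.adjoint θ₁).comp G₁ ∧
    K₂ = (ContinuousLinearMap.adjoint θ₂).comp G₂ := by

  have key₁ : ∀ w : H₁, θ ((WithLp.equiv 2 (H₁ × H₂)).symm (w, 0)) = θ₁ w := by
    intro w
    have h3 : (fun ω => (inner 𝕜 ((WithLp.equiv 2 (H₁ × H₂)).symm (F₁ ω, F₂ ω))
        ((WithLp.equiv 2 (H₁ × H₂)).symm (w, 0)) : 𝕜)) = fun ω => (inner 𝕜 (F₁ ω) w : 𝕜) := by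
      funext ω; simp [WithLp.prod_inner_apply]
    exact Lp.ext ((hθ _).trans (h3 ▸ (hθ₁ w).symm))
  have key₂ : ∀ z : H₂, θ ((WithLp.equiv 2 (H₁ × H₂)).symm (0, z)) = θ₂ z := by
    intro z
    have h3 : (fun ω => (inner 𝕜 ((WithLp.equiv 2 (H₁ × H₂)).symm (F₁ ω, F₂ ω))
        ((WithLp.equiv 2 (H₁ × H₂)).symm (0, z)) : 𝕜)) = fun ω => (inner 𝕜 (F₂ ω) z : 𝕜) := by
      funext ω; simp [WithLp.prod_inner_apply]
    exact Lp.ext ((hθ _).trans (h3 ▸ (hθ₂ z).symm))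
  have hce : ∀ x : WithLp 2 (H₁ × H₂),
      WithLp.prodContinuousLinearEquiv 2 𝕜 H₁ H₂ x = WithLp.equiv 2 (H₁ × H₂) x :=
    fun _ => rfl
  have hces : ∀ y : H₁ × H₂,
      (WithLp.prodContinuousLinearEquiv 2 𝕜 H₁ H₂).symm y = (WithLp.equiv 2 (H₁ × H₂)).symm y :=
    fun _ => rfl
  constructor
  · ext u
    have hd := ContinuousLinearMap.ext_iff.mp hdual ((WithLp.equiv 2 (H₁ × H₂)).symm (u, 0))
    have eq1 : (WithLp.equiv 2 (H₁ × H₂)).symm (K₁ u, 0) =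
        ContinuousLinearMap.adjoint θ (G₁ u) := by
      simpa [prodOp, coprodOp, hce, hces, Prod.map, Equiv.apply_symm_apply] using hd
    refine ext_inner_right 𝕜 fun w => ?_
    calc (inner 𝕜 (K₁ u) w : 𝕜)
        = inner 𝕜 ((WithLp.equiv 2 (H₁ × H₂)).symm (K₁ u, 0))
            ((WithLp.equiv 2 (H₁ × H₂)).symm (w, 0)) := by
          simp [WithLp.prod_inner_apply]
      _ = inner 𝕜 (ContinuousLinearMap.adjoint θ (G₁ u))
            ((WithLp.equiv 2 (H₁ × H₂)).symm (w, 0)) := by rw [eq1]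
      _ = inner 𝕜 (G₁ u) (θ ((WithLp.equiv 2 (H₁ × H₂)).symm (w, 0))) := adjoint_inner_left ..
      _ = inner 𝕜 (G₁ u) (θ₁ w) := by rw [key₁]
      _ = inner 𝕜 (ContinuousLinearMap.adjoint θ₁ (G₁ u)) w := (adjoint_inner_left ..).symm
  · ext v
    have hd := ContinuousLinearMap.ext_iff.mp hdual ((WithLp.equiv 2 (H₁ × H₂)).symm (0, v))
    have eq1 : (WithLp.equiv 2 (H₁ × H₂)).symm (0, K₂ v) =
        ContinuousLinearMap.adjoint θ (G₂ v) := by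
      simpa [prodOp, coprodOp, hce, hces, Prod.map, Equiv.apply_symm_apply] using hd
    refine ext_inner_right 𝕜 fun z => ?_
    calc (inner 𝕜 (K₂ v) z : 𝕜)
        = inner 𝕜 ((WithLp.equiv 2 (H₁ × H₂)).symm (0, K₂ v))
            ((WithLp.equiv 2 (H₁ × H₂)).symm (0, z)) := by
          simp [WithLp.prod_inner_apply]
      _ = inner 𝕜 (ContinuousLinearMap.adjoint θ (G₂ v))
            ((WithLp.equiv 2 (H₁ × H₂)).symm (0, z)) := by rw [eq1]
      _ = inner 𝕜 (G₂ v) (θ ((WithLp.equiv 2 (H₁ × H₂)).symm (0, z))) := adjoint_inner_left ..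
      _ = inner 𝕜 (G₂ v) (θ₂ z) := by rw [key₂]
      _ = inner 𝕜 (ContinuousLinearMap.adjoint θ₂ (G₂ v)) z := (adjoint_inner_left ..).symm
end

section
/- Let K₁ ∈ B(H₁), K₂ ∈ B(H₂), let F₁ : Ω → H₁ and F₂ : Ω → H₂ be Bessel mappings with transform operators θ₁, θ₂, let θ be the transform operator of F₁ ⊕ F₂, and set T = θ*, T₁ = θ₁*, T₂ = θ₂*. Suppose G₁ ∈ B(H₁, L²(Ω, 𝕜)) is a K₁-dual mapping to F₁ (K₁ = T₁ ∘ G₁) and G₂ ∈ B(H₂, L²(Ω, 𝕜)) is a K₂-dual mapping to F₂ (K₂ = T₂ ∘ G₂). Then G₁ ⊕ G₂ is a (K₁ ⊕ K₂)-dual mapping to F₁ ⊕ F₂ (i.e. K₁ ⊕ K₂ = T ∘ (G₁ ⊕ G₂)) if and only if T₁ ∘ G₂ = 0 and T₂ ∘ G₁ = 0. -/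
open MeasureTheory ContinuousLinearMap

private lemma adjoint_prod_decomp {𝕜 : Type*} [RCLike 𝕜] [MeasurableSpace 𝕜] [BorelSpace 𝕜]
    {H₁ : Type*} [NormedAddCommGroup H₁] [InnerProductSpace 𝕜 H₁] [CompleteSpace H₁]
    {H₂ : Type*} [NormedAddCommGroup H₂] [InnerProductSpace 𝕜 H₂] [CompleteSpace H₂]
    {Ω : Type*} [MeasurableSpace Ω] {μ : Measure Ω}
    (F₁ : Ω → H₁) (F₂ : Ω → H₂)
    (θ₁ : H₁ →L[𝕜] Lp 𝕜 2 μ)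
    (hθ₁ : ∀ u : H₁, (θ₁ u : Ω → 𝕜) =ᵐ[μ] fun ω => (inner 𝕜 (F₁ ω) u : 𝕜))
    (θ₂ : H₂ →L[𝕜] Lp 𝕜 2 μ)
    (hθ₂ : ∀ v : H₂, (θ₂ v : Ω → 𝕜) =ᵐ[μ] fun ω => (inner 𝕜 (F₂ ω) v : 𝕜))
    (θ : WithLp 2 (H₁ × H₂) →L[𝕜] Lp 𝕜 2 μ)
    (hθ : ∀ x : WithLp 2 (H₁ × H₂), (θ x : Ω → 𝕜) =ᵐ[μ]
      fun ω => (inner 𝕜 ((WithLp.equiv 2 (H₁ × H₂)).symm (F₁ ω, F₂ ω)) x : 𝕜)) :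
    ∀ f : Lp 𝕜 2 μ, ContinuousLinearMap.adjoint θ f =
      (WithLp.equiv 2 (H₁ × H₂)).symm
        (ContinuousLinearMap.adjoint θ₁ f, ContinuousLinearMap.adjoint θ₂ f) := by
  have hθ' : ∀ x : WithLp 2 (H₁ × H₂), θ x = θ₁ x.fst + θ₂ x.snd := by
    intro x
    apply Lp.ext
    filter_upwards [hθ x, (Lp.coeFn_add (θ₁ x.fst) (θ₂ x.snd)), hθ₁ x.fst, hθ₂ x.snd] with ω h1 h2 h3 h4
    rw [h1, h2, Pi.add_apply, h3, h4, WithLp.prod_inner_apply]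
    rfl
  intro f
  apply ext_inner_right 𝕜
  intro x
  rw [adjoint_inner_left, hθ' x, inner_add_right, WithLp.prod_inner_apply,
    ← adjoint_inner_left, ← adjoint_inner_left]
  rfl

private lemma comp_coprod_apply {𝕜 : Type*} [RCLike 𝕜] [MeasurableSpace 𝕜] [BorelSpace 𝕜]
    {H₁ : Type*} [NormedAddCommGroup H₁] [InnerProductSpace 𝕜 H₁] [CompleteSpace H₁]
    {H₂ : Type*} [NormedAddCommGroup H₂] [InnerProductSpace 𝕜 H₂] [CompleteSpace H₂]
    {Ω : Type*} [MeasurableSpace Ω] {μ : Measure Ω}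
    (θ : WithLp 2 (H₁ × H₂) →L[𝕜] Lp 𝕜 2 μ)
    (θ₁ : H₁ →L[𝕜] Lp 𝕜 2 μ) (θ₂ : H₂ →L[𝕜] Lp 𝕜 2 μ)
    (hadj : ∀ f : Lp 𝕜 2 μ, ContinuousLinearMap.adjoint θ f =
      (WithLp.equiv 2 (H₁ × H₂)).symm
        (ContinuousLinearMap.adjoint θ₁ f, ContinuousLinearMap.adjoint θ₂ f))
    (G₁ : H₁ →L[𝕜] Lp 𝕜 2 μ) (G₂ : H₂ →L[𝕜] Lp 𝕜 2 μ) :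
    ∀ x : WithLp 2 (H₁ × H₂),
      ((ContinuousLinearMap.adjoint θ).comp (coprodOp G₁ G₂)) x =
      (WithLp.equiv 2 (H₁ × H₂)).symm
        (ContinuousLinearMap.adjoint θ₁ (G₁ x.fst) + ContinuousLinearMap.adjoint θ₁ (G₂ x.snd),
         ContinuousLinearMap.adjoint θ₂ (G₁ x.fst) + ContinuousLinearMap.adjoint θ₂ (G₂ x.snd)) := by
  intro x
  have hco : coprodOp G₁ G₂ x = G₁ x.fst + G₂ x.snd := rfl
  rw [ContinuousLinearMap.comp_apply, hco, hadj, map_add, map_add]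

/-- If `G₁` is a `K₁`-dual mapping to `F₁` and `G₂` is a `K₂`-dual mapping to `F₂`, then
`G₁ ⊕ G₂` is a `(K₁ ⊕ K₂)`-dual mapping to `F₁ ⊕ F₂` if and only if `T₁ ∘ G₂ = 0` and
`T₂ ∘ G₁ = 0`, where `T = θ*`, `T₁ = θ₁*`, `T₂ = θ₂*`. -/
theorem prod_dual_iff
    {𝕜 : Type*} [RCLike 𝕜] [MeasurableSpace 𝕜] [BorelSpace 𝕜]
    {H₁ : Type*} [NormedAddCommGroup H₁] [InnerProductSpace 𝕜 H₁] [CompleteSpace H₁]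
    {H₂ : Type*} [NormedAddCommGroup H₂] [InnerProductSpace 𝕜 H₂] [CompleteSpace H₂]
    {Ω : Type*} [MeasurableSpace Ω] {μ : Measure Ω}
    (K₁ : H₁ →L[𝕜] H₁) (K₂ : H₂ →L[𝕜] H₂)
    (F₁ : Ω → H₁) (F₂ : Ω → H₂) (B₁ B₂ : ℝ) (hB₁ : 0 < B₁) (hB₂ : 0 < B₂)
    (hbessel₁ : ∀ u : H₁, Measurable (fun ω => (inner 𝕜 (F₁ ω) u : 𝕜)) ∧
      ∫ ω, ‖(inner 𝕜 (F₁ ω) u : 𝕜)‖ ^ 2 ∂μ ≤ B₁ * ‖u‖ ^ 2)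
    (hbessel₂ : ∀ v : H₂, Measurable (fun ω => (inner 𝕜 (F₂ ω) v : 𝕜)) ∧
      ∫ ω, ‖(inner 𝕜 (F₂ ω) v : 𝕜)‖ ^ 2 ∂μ ≤ B₂ * ‖v‖ ^ 2)
    (θ₁ : H₁ →L[𝕜] Lp 𝕜 2 μ)
    (hθ₁ : ∀ u : H₁, (θ₁ u : Ω → 𝕜) =ᵐ[μ] fun ω => (inner 𝕜 (F₁ ω) u : 𝕜))
    (θ₂ : H₂ →L[𝕜] Lp 𝕜 2 μ)
    (hθ₂ : ∀ v : H₂, (θ₂ v : Ω → 𝕜) =ᵐ[μ] fun ω => (inner 𝕜 (F₂ ω) v : 𝕜))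
    (θ : WithLp 2 (H₁ × H₂) →L[𝕜] Lp 𝕜 2 μ)
    (hθ : ∀ x : WithLp 2 (H₁ × H₂), (θ x : Ω → 𝕜) =ᵐ[μ]
      fun ω => (inner 𝕜 ((WithLp.equiv 2 (H₁ × H₂)).symm (F₁ ω, F₂ ω)) x : 𝕜))
    (G₁ : H₁ →L[𝕜] Lp 𝕜 2 μ) (G₂ : H₂ →L[𝕜] Lp 𝕜 2 μ)
    (hG₁ : K₁ = (ContinuousLinearMap.adjoint θ₁).comp G₁)
    (hG₂ : K₂ = (ContinuousLinearMap.adjoint θ₂).comp G₂) :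
    prodOp K₁ K₂ = (ContinuousLinearMap.adjoint θ).comp (coprodOp G₁ G₂) ↔
    ((ContinuousLinearMap.adjoint θ₁).comp G₂ = 0 ∧
     (ContinuousLinearMap.adjoint θ₂).comp G₁ = 0) := by
  have hadj := adjoint_prod_decomp F₁ F₂ θ₁ hθ₁ θ₂ hθ₂ θ hθ
  have hR := comp_coprod_apply θ θ₁ θ₂ hadj G₁ G₂
  have hL : ∀ x : WithLp 2 (H₁ × H₂),
      prodOp K₁ K₂ x = (WithLp.equiv 2 (H₁ × H₂)).symm (K₁ x.fst, K₂ x.snd) := fun x => rfl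
  constructor
  · intro h
    constructor
    · ext v
      have h0 := ContinuousLinearMap.ext_iff.mp h ((WithLp.equiv 2 (H₁ × H₂)).symm (0, v))
      have h0' := (hL _).symm.trans (h0.trans (hR _))
      have h1 : K₁ 0 = ContinuousLinearMap.adjoint θ₁ (G₁ 0) +
          ContinuousLinearMap.adjoint θ₁ (G₂ v) :=
        congrArg (fun z : WithLp 2 (H₁ × H₂) => z.fst) h0'
      rw [map_zero K₁, map_zero G₁, map_zero (ContinuousLinearMap.adjoint θ₁), zero_add] at h1
      rw [ContinuousLinearMap.comp_apply, ContinuousLinearMap.zero_apply]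
      exact h1.symm
    · ext u
      have h0 := ContinuousLinearMap.ext_iff.mp h ((WithLp.equiv 2 (H₁ × H₂)).symm (u, 0))
      have h0' := (hL _).symm.trans (h0.trans (hR _))
      have h1 : K₂ 0 = ContinuousLinearMap.adjoint θ₂ (G₁ u) +
          ContinuousLinearMap.adjoint θ₂ (G₂ 0) :=
        congrArg (fun z : WithLp 2 (H₁ × H₂) => z.snd) h0'
      rw [map_zero K₂, map_zero G₂, map_zero (ContinuousLinearMap.adjoint θ₂), add_zero] at h1
      rw [ContinuousLinearMap.comp_apply, ContinuousLinearMap.zero_apply]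
      exact h1.symm
  · rintro ⟨h1, h2⟩
    ext x
    have e1 : ContinuousLinearMap.adjoint θ₁ (G₂ x.snd) = 0 := by
      have h0 := ContinuousLinearMap.ext_iff.mp h1 x.snd
      rwa [ContinuousLinearMap.comp_apply, ContinuousLinearMap.zero_apply] at h0
    have e2 : ContinuousLinearMap.adjoint θ₂ (G₁ x.fst) = 0 := by
      have h0 := ContinuousLinearMap.ext_iff.mp h2 x.fst
      rwa [ContinuousLinearMap.comp_apply, ContinuousLinearMap.zero_apply] at h0
    have e3 : K₁ x.fst = ContinuousLinearMap.adjoint θ₁ (G₁ x.fst) := by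
      have h0 := ContinuousLinearMap.ext_iff.mp hG₁ x.fst
      rwa [ContinuousLinearMap.comp_apply] at h0
    have e4 : K₂ x.snd = ContinuousLinearMap.adjoint θ₂ (G₂ x.snd) := by
      have h0 := ContinuousLinearMap.ext_iff.mp hG₂ x.snd
      rwa [ContinuousLinearMap.comp_apply] at h0
    refine (hL x).trans (Eq.trans (congrArg (WithLp.equiv 2 (H₁ × H₂)).symm ?_) (hR x).symm)
    refine Prod.ext ?_ ?_
    · rw [e3, e1, add_zero]
    · rw [e4, e2, zero_add]
end
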